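/- arXiv:1502.04152 — 2 statements merged into one kernel-verified Lean document; each statement's English description precedes it below -/
import Mathlib

section
/- Let p be a prime and s > 1 an integer, and set q = p^{s-1}. Let F ∈ F_p[[x,y]] be the Honda formal group law of height s. Then F lies in F_p[x][[y]]; that is, writing F(x,y) = Σ_{l≥0} A_l(x) y^l with A_l(x) ∈ F_p[[x]], each power series A_l(x) is in fact a polynomial in x (it has only finitely many nonzero coefficients). -/
open MvPowerSeries Finsupp
open scoped Classical

/-- Substitution of a multivariate power series (with zero constant term)
into a one-variable power series. -/
noncomputable def substPS {σ R : Type*} [CommRing R]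
    (g : MvPowerSeries σ R) (f : PowerSeries R) : MvPowerSeries σ R :=
  fun d => ∑ n ∈ Finset.range (d.sum (fun _ k => k) + 1),
    PowerSeries.coeff n f * MvPowerSeries.coeff d (g ^ n)

/-- Substitution of a pair of power series (with zero constant terms) into a
two-variable power series `F`, i.e. `F(a, b)`. -/
noncomputable def subst2 {σ R : Type*} [CommRing R]
    (a b : MvPowerSeries σ R) (F : MvPowerSeries (Fin 2) R) : MvPowerSeries σ R :=
  fun d => ∑ i ∈ Finset.range (d.sum (fun _ k => k) + 1),
    ∑ j ∈ Finset.range (d.sum (fun _ k => k) + 1),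
      MvPowerSeries.coeff (Finsupp.single (0 : Fin 2) i + Finsupp.single 1 j) F *
        MvPowerSeries.coeff d (a ^ i * b ^ j)

/-- The Honda logarithm `l(x) = Σ_{i ≥ 0} p^{-i} x^{p^{s i}}` over `ℚ_p`. -/
noncomputable def hondaLog (p s : ℕ) [Fact p.Prime] : PowerSeries ℚ_[p] :=
  PowerSeries.mk fun n =>
    if h : ∃ i, n = p ^ (s * i) then (p : ℚ_[p]) ^ (-(Nat.find h : ℤ)) else 0

/-- `F ∈ 𝔽_p[[x,y]]` is the Honda formal group law of height `s`:  it is the coefficientwise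
mod `p` reduction of the (unique) power series `F₀` with coefficients in `ℤ_p` and zero
constant term satisfying `l(F₀(x,y)) = l(x) + l(y)` over `ℚ_p`, where `l` is the Honda
logarithm `l(x) = Σ_{i ≥ 0} p^{-i} x^{p^{s i}}`. -/
def IsHondaFGL (p : ℕ) [Fact p.Prime] (s : ℕ) (F : MvPowerSeries (Fin 2) (ZMod p)) : Prop :=
  ∃ F₀ : MvPowerSeries (Fin 2) ℤ_[p],
    MvPowerSeries.constantCoeff F₀ = 0 ∧
    substPS (MvPowerSeries.map (PadicInt.Coe.ringHom (p := p)) F₀) (hondaLog p s) =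
      substPS (MvPowerSeries.X 0) (hondaLog p s) + substPS (MvPowerSeries.X 1) (hondaLog p s) ∧
    F = MvPowerSeries.map (PadicInt.toZMod (p := p)) F₀

namespace HondaAux


noncomputable abbrev ee (i l : ℕ) : Fin 2 →₀ ℕ := Finsupp.single (0 : Fin 2) i + Finsupp.single 1 l

lemma ee_apply0 (i l : ℕ) : ee i l 0 = i := by simp [ee, Finsupp.single_apply]
lemma ee_apply1 (i l : ℕ) : ee i l 1 = l := by simp [ee, Finsupp.single_apply]

lemma fin2_decomp (d : Fin 2 →₀ ℕ) : d = ee (d 0) (d 1) := by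
  ext a
  fin_cases a <;> simp [ee, Finsupp.single_apply]

lemma ee_sum (i l : ℕ) : (ee i l).sum (fun _ k => k) = i + l := by
  classical
  rw [Finsupp.sum_fintype]
  · rw [show (Finset.univ : Finset (Fin 2)) = {0, 1} by decide]
    simp [ee_apply0, ee_apply1]
  · intro a; rfl

lemma ee_inj {i l i' l' : ℕ} (h : ee i l = ee i' l') : i = i' ∧ l = l' := by
  constructor
  · have := congrArg (fun d : Fin 2 →₀ ℕ => d 0) h
    simpa [ee_apply0] using this
  · have := congrArg (fun d : Fin 2 →₀ ℕ => d 1) h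
    simpa [ee_apply1] using this

variable {R : Type*} [CommRing R]

/-- the `m`-th column of a 2-variable power series -/
noncomputable def col (H : MvPowerSeries (Fin 2) R) (m i : ℕ) : R :=
  MvPowerSeries.coeff (ee i m) H

lemma col_mul (H K : MvPowerSeries (Fin 2) R) (m i : ℕ) :
    col (H * K) m i = ∑ uv ∈ Finset.HasAntidiagonal.antidiagonal m, ∑ ab ∈ Finset.HasAntidiagonal.antidiagonal i,
      col H uv.1 ab.1 * col K uv.2 ab.2 := by
  classical
  rw [col, MvPowerSeries.coeff_mul, ← Finset.sum_product']
  refine Finset.sum_nbij' (fun x => ((x.1 1, x.2 1), (x.1 0, x.2 0)))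
    (fun y => (ee y.2.1 y.1.1, ee y.2.2 y.1.2)) ?_ ?_ ?_ ?_ ?_
  · intro x hx
    rw [Finset.HasAntidiagonal.mem_antidiagonal] at hx
    have h0 : x.1 0 + x.2 0 = i := by
      have := congrArg (fun d : Fin 2 →₀ ℕ => d 0) hx
      simpa [ee_apply0] using this
    have h1 : x.1 1 + x.2 1 = m := by
      have := congrArg (fun d : Fin 2 →₀ ℕ => d 1) hx
      simpa [ee_apply1] using this
    simp [Finset.mem_product, h0, h1]
  · intro y hy
    simp only [Finset.mem_product, Finset.HasAntidiagonal.mem_antidiagonal] at hy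
    rw [Finset.HasAntidiagonal.mem_antidiagonal]
    have : ee (y.2.1 + y.2.2) (y.1.1 + y.1.2) = ee i m := by rw [hy.1, hy.2]
    calc ee y.2.1 y.1.1 + ee y.2.2 y.1.2 = ee (y.2.1 + y.2.2) (y.1.1 + y.1.2) := by
          simp [ee]; abel
      _ = ee i m := this
  · intro x hx
    simp only
    rw [← fin2_decomp, ← fin2_decomp]
  · intro y hy
    simp [ee_apply0, ee_apply1]
  · intro x hx
    simp [col]
    rw [← fin2_decomp, ← fin2_decomp]




variable {p : ℕ} [hp : Fact p.Prime]

/-- coefficients tend to zero `p`-adically -/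
def NullSeq (p : ℕ) [Fact p.Prime] (u : ℕ → ℚ_[p]) : Prop :=
  ∀ k : ℕ, ∃ N, ∀ i ≥ N, ‖u i‖ ≤ ((p : ℝ) ^ k)⁻¹

lemma p_real_pos : (0:ℝ) < (p:ℝ) := by
  exact_mod_cast hp.out.pos

lemma p_real_one_lt : (1:ℝ) < (p:ℝ) := by
  exact_mod_cast hp.out.one_lt

lemma ppow_pos (k : ℕ) : (0:ℝ) < ((p:ℝ)^k) := pow_pos p_real_pos k

lemma ppow_inv_le {j k : ℕ} (h : k ≤ j) : ((p:ℝ)^j)⁻¹ ≤ ((p:ℝ)^k)⁻¹ := by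
  apply inv_anti₀ (ppow_pos k)
  exact pow_le_pow_right₀ (le_of_lt p_real_one_lt) h

lemma ppow_inv_le_one (k : ℕ) : ((p:ℝ)^k)⁻¹ ≤ 1 := by
  simpa using ppow_inv_le (Nat.zero_le k)

/-- ultrametric bound for finite sums in `ℚ_p` -/
lemma norm_sum_le_of_forall {ι : Type*} (s : Finset ι) (f : ι → ℚ_[p]) (C : ℝ)
    (hC : 0 ≤ C) (h : ∀ i ∈ s, ‖f i‖ ≤ C) : ‖∑ i ∈ s, f i‖ ≤ C := by
  classical
  induction s using Finset.induction_on with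
  | empty => simpa using hC
  | insert _ _ hx ih =>
    rename_i a t
    rw [Finset.sum_insert hx]
    refine le_trans (Padic.nonarchimedean _ _) (max_le ?_ ?_)
    · exact h a (Finset.mem_insert_self a t)
    · exact ih fun i hi => h i (Finset.mem_insert_of_mem hi)

lemma NullSeq.bdd {u : ℕ → ℚ_[p]} (hu : NullSeq p u) : ∃ C : ℝ, 0 ≤ C ∧ ∀ i, ‖u i‖ ≤ C := by
  obtain ⟨N, hN⟩ := hu 0
  refine ⟨max 1 (((Finset.range (N+1)).image (fun i => ‖u i‖)).max' ?_ ), ?_, ?_⟩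
  · exact (Finset.nonempty_range_iff.2 (Nat.succ_ne_zero _)).image _
  · exact le_trans zero_le_one (le_max_left _ _)
  · intro i
    rcases le_or_gt N i with h | h
    · refine le_trans (hN i h) (le_trans ?_ (le_max_left _ _))
      simpa using ppow_inv_le_one 0
    · refine le_trans ?_ (le_max_right _ _)
      apply Finset.le_max'
      exact Finset.mem_image_of_mem _ (Finset.mem_range.2 (by omega))

lemma null_zero : NullSeq p (fun _ => 0) := by
  intro k; exact ⟨0, fun i _ => by simp [le_of_lt (inv_pos.2 (ppow_pos k))]⟩

lemma null_congr {u v : ℕ → ℚ_[p]} (h : ∀ i, u i = v i) (hu : NullSeq p u) : NullSeq p v := by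
  intro k; obtain ⟨N, hN⟩ := hu k; exact ⟨N, fun i hi => (h i) ▸ hN i hi⟩

lemma null_comp {u : ℕ → ℚ_[p]} (hu : NullSeq p u) (a b : ℕ) :
    NullSeq p (fun i => u (i + a - b)) := by
  intro k
  obtain ⟨N, hN⟩ := hu k
  exact ⟨N + b, fun i hi => hN _ (by omega)⟩

lemma null_scale {u : ℕ → ℚ_[p]} (hu : NullSeq p u) (κ : ℚ_[p]) :
    NullSeq p (fun i => κ * u i) := by
  intro k
  obtain ⟨v, hv⟩ : ∃ v : ℕ, ‖κ‖ ≤ (p:ℝ)^v := by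
    obtain ⟨n, hn⟩ := exists_nat_gt ‖κ‖
    refine ⟨n, le_trans (le_of_lt hn) ?_⟩
    calc (n:ℝ) ≤ (2:ℝ)^n := by exact_mod_cast Nat.le_of_lt (Nat.lt_two_pow_self)
      _ ≤ (p:ℝ)^n := by
          apply pow_le_pow_left₀ (by norm_num)
          exact_mod_cast hp.out.two_le
  obtain ⟨N, hN⟩ := hu (k + v)
  refine ⟨N, fun i hi => ?_⟩
  rw [norm_mul]
  calc ‖κ‖ * ‖u i‖ ≤ (p:ℝ)^v * ((p:ℝ)^(k+v))⁻¹ := by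
        apply mul_le_mul hv (hN i hi) (norm_nonneg _) (le_of_lt (ppow_pos v))
    _ = ((p:ℝ)^k)⁻¹ := by
        rw [pow_add, mul_inv]
        rw [← mul_assoc, mul_comm ((p:ℝ)^v) _, mul_assoc]
        rw [mul_inv_cancel₀ (ne_of_gt (ppow_pos v)), mul_one]

lemma null_finsum {ι : Type*} (s : Finset ι) (t : ι → ℕ → ℚ_[p])
    (h : ∀ j ∈ s, NullSeq p (t j)) : NullSeq p (fun i => ∑ j ∈ s, t j i) := by
  classical
  intro k
  choose Nf hNf using fun j (hj : j ∈ s) => h j hj k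
  refine ⟨(s.attach.sup fun j => Nf j.1 j.2), fun i hi => ?_⟩
  apply norm_sum_le_of_forall _ _ _ (le_of_lt (inv_pos.2 (ppow_pos k)))
  intro j hj
  have hle : Nf j hj ≤ s.attach.sup fun j => Nf j.1 j.2 :=
    Finset.le_sup (f := fun j : {x // x ∈ s} => Nf j.1 j.2) (Finset.mem_attach s ⟨j, hj⟩)
  exact hNf j hj i (le_trans hle hi)

lemma null_conv {u v : ℕ → ℚ_[p]} (hub : ∀ i, ‖u i‖ ≤ 1) (hvb : ∀ i, ‖v i‖ ≤ 1)
    (hu : NullSeq p u) (hv : NullSeq p v) :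
    NullSeq p (fun n => ∑ ab ∈ Finset.HasAntidiagonal.antidiagonal n, u ab.1 * v ab.2) := by
  intro k
  obtain ⟨Nu, hNu⟩ := hu k
  obtain ⟨Nv, hNv⟩ := hv k
  refine ⟨Nu + Nv, fun n hn => ?_⟩
  apply norm_sum_le_of_forall _ _ _ (le_of_lt (inv_pos.2 (ppow_pos k)))
  rintro ⟨a, b⟩ hab
  rw [Finset.HasAntidiagonal.mem_antidiagonal] at hab
  rw [norm_mul]
  rcases le_or_gt Nu a with h | h
  · calc ‖u a‖ * ‖v b‖ ≤ ((p:ℝ)^k)⁻¹ * 1 :=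
        mul_le_mul (hNu a h) (hvb b) (norm_nonneg _) (le_of_lt (inv_pos.2 (ppow_pos k)))
      _ = ((p:ℝ)^k)⁻¹ := mul_one _
  · have hb : Nv ≤ b := by omega
    calc ‖u a‖ * ‖v b‖ ≤ 1 * ((p:ℝ)^k)⁻¹ :=
        mul_le_mul (hub a) (hNv b hb) (norm_nonneg _) zero_le_one
      _ = ((p:ℝ)^k)⁻¹ := one_mul _

/-- triangular sums of uniformly geometrically-small null rows are null -/
lemma null_triangular (t : ℕ → ℕ → ℚ_[p]) (C : ℕ)
    (hbd : ∀ j i, ‖t j i‖ ≤ (C:ℝ) * ((p:ℝ)^j)⁻¹)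
    (hnull : ∀ j, NullSeq p (t j)) (g : ℕ → ℕ) :
    NullSeq p (fun i => ∑ j ∈ Finset.range (g i), t j i) := by
  intro k
  set j₀ := k + C + 1 with hj₀
  choose Nf hNf using fun j => hnull j k
  refine ⟨(Finset.range j₀).sup Nf, fun i hi => ?_⟩
  apply norm_sum_le_of_forall _ _ _ (le_of_lt (inv_pos.2 (ppow_pos k)))
  intro j hj
  rcases lt_or_ge j j₀ with h | h
  · exact hNf j i (le_trans (Finset.le_sup (Finset.mem_range.2 h)) hi)
  · refine le_trans (hbd j i) ?_
    have hC2 : (C:ℝ) ≤ (p:ℝ)^C := by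
      calc (C:ℝ) ≤ (2:ℝ)^C := by exact_mod_cast Nat.le_of_lt (Nat.lt_two_pow_self)
        _ ≤ (p:ℝ)^C := by
            apply pow_le_pow_left₀ (by norm_num); exact_mod_cast hp.out.two_le
    calc (C:ℝ) * ((p:ℝ)^j)⁻¹ ≤ (p:ℝ)^C * ((p:ℝ)^j₀)⁻¹ :=
          mul_le_mul hC2 (ppow_inv_le h) (le_of_lt (inv_pos.2 (ppow_pos j))) (le_of_lt (ppow_pos C))
      _ = ((p:ℝ)^(k+1))⁻¹ := by
          rw [hj₀]
          rw [show k + C + 1 = (k+1) + C by ring, pow_add, mul_inv]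
          rw [← mul_assoc, mul_comm ((p:ℝ)^C) _, mul_assoc,
            mul_inv_cancel₀ (ne_of_gt (ppow_pos C)), mul_one]
      _ ≤ ((p:ℝ)^k)⁻¹ := ppow_inv_le (by omega)


lemma ee_sub (i a m : ℕ) (h : a ≤ i) : ee i m - Finsupp.single (0:Fin 2) a = ee (i - a) m := by
  ext x
  fin_cases x <;> simp [ee, Finsupp.single_apply, Finsupp.sub_apply]

lemma single0_le_ee {a i m : ℕ} : Finsupp.single (0:Fin 2) a ≤ ee i m ↔ a ≤ i := by
  rw [Finsupp.le_def]
  constructor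
  · intro h
    have := h 0
    simpa [ee, Finsupp.single_apply] using this
  · intro h x
    fin_cases x <;> simp [ee, Finsupp.single_apply, h]

/-- coefficient of `H * X₀ᵃ` -/
lemma col_mul_X0_pow (H : MvPowerSeries (Fin 2) R) (a m i : ℕ) :
    col (H * (MvPowerSeries.X (0 : Fin 2))^a) m i
      = if a ≤ i then col H m (i - a) else 0 := by
  classical
  rw [col, MvPowerSeries.coeff_mul]
  rcases le_or_gt a i with h | h
  · rw [if_pos h]
    rw [Finset.sum_eq_single (ee (i - a) m, Finsupp.single (0:Fin 2) a)]
    · rw [MvPowerSeries.coeff_X_pow, if_pos rfl, mul_one, col]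
    · rintro ⟨d1, d2⟩ hmem hne
      rw [MvPowerSeries.coeff_X_pow]
      rw [Finset.HasAntidiagonal.mem_antidiagonal] at hmem
      by_cases hd2 : d2 = Finsupp.single (0:Fin 2) a
      · exfalso
        apply hne
        subst hd2
        have hd1 : d1 = ee (i-a) m := by
          have h2 : d1 = ee i m - Finsupp.single (0:Fin 2) a := by
            rw [← hmem]; ext x; simp
          rw [h2, ee_sub _ _ _ h]
        rw [hd1]
      · rw [if_neg hd2, mul_zero]
    · intro hnot
      exfalso
      apply hnot
      rw [Finset.HasAntidiagonal.mem_antidiagonal]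
      ext x
      fin_cases x <;> simp [ee, Finsupp.single_apply] <;> omega
  · rw [if_neg (by omega)]
    apply Finset.sum_eq_zero
    rintro ⟨d1, d2⟩ hmem
    rw [Finset.HasAntidiagonal.mem_antidiagonal] at hmem
    rw [MvPowerSeries.coeff_X_pow]
    by_cases hd2 : d2 = Finsupp.single (0:Fin 2) a
    · exfalso
      subst hd2
      have := congrArg (fun d : Fin 2 →₀ ℕ => d 0) hmem
      simp [ee, Finsupp.single_apply] at this
      omega
    · rw [if_neg hd2, mul_zero]

/-- column extraction at level 0 is compatible with powers -/
lemma col0_pow (H : MvPowerSeries (Fin 2) R) (N n : ℕ) :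
    col (H ^ N) 0 n = PowerSeries.coeff n ((PowerSeries.mk (col H 0)) ^ N) := by
  classical
  induction N generalizing n with
  | zero =>
    simp only [pow_zero]
    rw [col]
    rcases Nat.eq_zero_or_pos n with h | h
    · subst h
      simp [ee, MvPowerSeries.coeff_one]
    · rw [MvPowerSeries.coeff_one, PowerSeries.coeff_one, if_neg, if_neg (by omega)]
      intro hc
      have := congrArg (fun d : Fin 2 →₀ ℕ => d 0) hc
      simp [ee, Finsupp.single_apply] at this
      omega
  | succ N ih =>
    rw [pow_succ, pow_succ, col_mul, PowerSeries.coeff_mul]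
    rw [Finset.Nat.antidiagonal_zero, Finset.sum_singleton]
    apply Finset.sum_congr rfl
    rintro ⟨a, b⟩ hab
    rw [ih a, PowerSeries.coeff_mk]

/-- if all monomials of `M` have `y`-degree ≥ 1, the same for `M^r` with `r` -/
lemma col_pow_vanish (M : MvPowerSeries (Fin 2) R) (h0 : ∀ i, col M 0 i = 0) :
    ∀ r m i, m < r → col (M ^ r) m i = 0 := by
  intro r
  induction r with
  | zero => intro m i hm; omega
  | succ r ih =>
    intro m i hm
    rw [pow_succ, col_mul]
    apply Finset.sum_eq_zero
    rintro ⟨u, v⟩ huv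
    rw [Finset.HasAntidiagonal.mem_antidiagonal] at huv
    apply Finset.sum_eq_zero
    rintro ⟨a, b⟩ hab
    rcases Nat.eq_zero_or_pos v with hv | hv
    · subst hv
      rw [h0 b, mul_zero]
    · rw [ih u a (by omega), zero_mul]

/-- two power series with zero constant term agreeing below `n` have equal
`n`-th coefficients of their `N`-th powers, `N ≥ 2`. -/
lemma pow_coeff_agree (A B : PowerSeries R) (hA : PowerSeries.constantCoeff A = 0)
    (hB : PowerSeries.constantCoeff B = 0) (n N : ℕ) (hN : 2 ≤ N)
    (hag : ∀ k < n, PowerSeries.coeff k A = PowerSeries.coeff k B) :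
    PowerSeries.coeff n (A ^ N) = PowerSeries.coeff n (B ^ N) := by
  have key : A ^ N - B ^ N = (∑ k ∈ Finset.range N, A ^ k * B ^ (N - 1 - k)) * (A - B) :=
    (geom_sum₂_mul A B N).symm
  have h1 : PowerSeries.coeff n (A ^ N - B ^ N) = 0 := by
    rw [key, PowerSeries.coeff_mul]
    apply Finset.sum_eq_zero
    rintro ⟨a, b⟩ hab
    rw [Finset.HasAntidiagonal.mem_antidiagonal] at hab
    rcases lt_or_ge b n with hb | hb
    · rw [map_sub, hag b hb, sub_self, mul_zero]
    · have hbn : b = n := by omega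
      have ha0 : a = 0 := by omega
      subst hbn; subst ha0
      have hW : PowerSeries.constantCoeff (∑ k ∈ Finset.range N, A ^ k * B ^ (N - 1 - k)) = 0 := by
        rw [map_sum]
        apply Finset.sum_eq_zero
        intro k hk
        rw [Finset.mem_range] at hk
        rw [map_mul, map_pow, map_pow, hA, hB]
        rcases Nat.eq_zero_or_pos k with h | h
        · subst h
          rw [pow_zero, one_mul, zero_pow (by omega)]
        · rw [zero_pow (by omega), zero_mul]
      rw [← PowerSeries.coeff_zero_eq_constantCoeff] at hW
      rw [hW, zero_mul]
  have h2 := map_sub (PowerSeries.coeff n) (A^N) (B^N)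
  rw [h1] at h2
  exact sub_eq_zero.mp h2.symm




variable {p : ℕ} [hp : Fact p.Prime] {s : ℕ}

noncomputable def φ (p s : ℕ) [Fact p.Prime] : ℕ → ℚ_[p] :=
  fun n => PowerSeries.coeff n (hondaLog p s)

lemma pow_sj_inj (hs : 0 < s) {a b : ℕ} (hab : p ^ (s * a) = p ^ (s * b)) : a = b := by
  have h1 := Nat.pow_right_injective hp.out.two_le hab
  exact Nat.eq_of_mul_eq_mul_left hs h1

lemma φ_pow (hs : 0 < s) (j : ℕ) : φ p s (p ^ (s * j)) = (p : ℚ_[p]) ^ (-(j : ℤ)) := by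
  rw [φ, hondaLog, PowerSeries.coeff_mk]
  rw [dif_pos ⟨j, rfl⟩]
  have h := Nat.find_spec (⟨j, rfl⟩ : ∃ i, p ^ (s*j) = p ^ (s * i))
  have h2 : j = Nat.find (⟨j, rfl⟩ : ∃ i, p ^ (s*j) = p ^ (s * i)) := pow_sj_inj hs h
  rw [← h2]

lemma φ_not {n : ℕ} (h : ¬ ∃ j, n = p ^ (s * j)) : φ p s n = 0 := by
  rw [φ, hondaLog, PowerSeries.coeff_mk, dif_neg h]

lemma φ_zero : φ p s 0 = 0 := by
  apply φ_not
  rintro ⟨j, hj⟩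
  have : 0 < p ^ (s * j) := pow_pos hp.out.pos _
  omega

lemma sj_lt_self (hs : 0 < s) (j : ℕ) : j < p ^ (s * j) := by
  calc j ≤ s * j := Nat.le_mul_of_pos_left j hs
    _ < p ^ (s * j) := Nat.lt_pow_self hp.out.one_lt

/-- collapse a `hondaLog`-weighted sum to a sum over powers of `p^s` -/
lemma collapse (hs : 0 < s) (N : ℕ) (t : ℕ → ℚ_[p]) :
    ∑ n ∈ Finset.range (N+1), φ p s n * t n
      = ∑ j ∈ Finset.range (N+1),
          if p ^ (s * j) ≤ N then (p : ℚ_[p]) ^ (-(j:ℤ)) * t (p ^ (s * j)) else 0 := by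
  rw [← Finset.sum_filter]
  rw [← Finset.sum_filter_of_ne (p := fun n => ∃ j, n = p ^ (s * j))
    (by intro n _ hne; by_contra hc; exact hne (by rw [φ_not hc, zero_mul]))]
  refine (Finset.sum_bij (fun j _ => p ^ (s * j)) ?_ ?_ ?_ ?_).symm
  · intro j hj
    simp only [Finset.mem_filter, Finset.mem_range] at hj ⊢
    have := sj_lt_self (p := p) hs j
    exact ⟨by omega, ⟨j, rfl⟩⟩
  · intro a _ b _ hab
    exact pow_sj_inj hs hab
  · intro n hn
    simp only [Finset.mem_filter, Finset.mem_range] at hn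
    obtain ⟨hn1, j, rfl⟩ := hn
    refine ⟨j, ?_, rfl⟩
    simp only [Finset.mem_filter, Finset.mem_range]
    have := sj_lt_self (p := p) hs j
    omega
  · intro j hj
    simp only [Finset.mem_filter, Finset.mem_range] at hj
    rw [φ_pow hs]

/-- `p`-adic bound on binomial coefficients `choose (p^(s*j)) r` for `1 ≤ r ≤ l`. -/
lemma norm_choose_le (j r l : ℕ) (hr : 1 ≤ r) (hrl : r ≤ l) :
    ‖(((p ^ (s * j)).choose r : ℕ) : ℚ_[p])‖ ≤ (p:ℝ)^l * ((p:ℝ)^(s*j))⁻¹ := by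
  set N := p ^ (s * j) with hN
  have hppos : (0:ℝ) < (p:ℝ) := by exact_mod_cast hp.out.pos
  have hNpos : 0 < N := pow_pos hp.out.pos _
  have hrhs0 : (0:ℝ) ≤ (p:ℝ)^l * ((p:ℝ)^(s*j))⁻¹ := by positivity
  rcases lt_or_ge N r with h | h
  · rw [Nat.choose_eq_zero_of_lt h]
    simpa using hrhs0
  have hC0 : (N.choose r) ≠ 0 := (Nat.choose_pos h).ne'
  have hC'0 : ((N-1).choose (r-1)) ≠ 0 := (Nat.choose_pos (by omega)).ne'
  have hval : s * j ≤ padicValNat p (N.choose r) + padicValNat p r := by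
    have hid : r * N.choose r = N * ((N-1).choose (r-1)) := by
      have h5 := Nat.add_one_mul_choose_eq (N-1) (r-1)
      have hN1 : N - 1 + 1 = N := by omega
      have hr1 : r - 1 + 1 = r := by omega
      rw [hN1, hr1] at h5
      rw [mul_comm]
      exact h5.symm
    have h1 : padicValNat p (r * N.choose r) = padicValNat p r + padicValNat p (N.choose r) :=
      padicValNat.mul (by omega) hC0
    have h2 : padicValNat p (N * ((N-1).choose (r-1)))
        = padicValNat p N + padicValNat p ((N-1).choose (r-1)) :=
      padicValNat.mul (by omega) hC'0
    have h3 : padicValNat p N = s * j := by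
      rw [hN, padicValNat.prime_pow]
    have h4 : padicValNat p r + padicValNat p (N.choose r)
        = s * j + padicValNat p ((N-1).choose (r-1)) := by
      rw [← h1, ← h3, ← h2, hid]
    omega
  have hvr : padicValNat p r ≤ l := by
    have h1 : p ^ padicValNat p r ∣ r := pow_padicValNat_dvd
    have h2 : p ^ padicValNat p r ≤ r := Nat.le_of_dvd (by omega) h1
    have h3 : padicValNat p r < p ^ padicValNat p r := Nat.lt_pow_self hp.out.one_lt
    omega
  rcases le_or_gt l (s * j) with hc | hc
  · have hdvd : (p:ℤ) ^ (s*j - l) ∣ ((N.choose r : ℕ) : ℤ) := by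
      have hd : p ^ (s*j - l) ∣ N.choose r := by
        refine dvd_trans (pow_dvd_pow p ?_) pow_padicValNat_dvd
        omega
      exact_mod_cast Int.natCast_dvd_natCast.2 hd
    have hb := (Padic.norm_int_le_pow_iff_dvd ((N.choose r : ℕ) : ℤ) (s*j - l)).2 hdvd
    rw [show (((N.choose r : ℕ) : ℤ) : ℚ_[p]) = ((N.choose r : ℕ) : ℚ_[p]) by push_cast; ring] at hb
    refine le_trans hb (le_of_eq ?_)
    rw [← zpow_natCast (p:ℝ) l, ← zpow_natCast (p:ℝ) (s*j), ← zpow_neg, ← zpow_add₀ (ne_of_gt hppos)]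
    congr 1
    push_cast
    omega
  · have h1 : ‖(((N.choose r : ℕ)) : ℚ_[p])‖ ≤ 1 := by
      have h2 := Padic.norm_int_le_one (p := p) ((N.choose r : ℕ) : ℤ)
      rwa [show (((N.choose r : ℕ) : ℤ) : ℚ_[p]) = ((N.choose r : ℕ) : ℚ_[p]) by push_cast; ring] at h2
    refine le_trans h1 ?_
    rw [← zpow_natCast (p:ℝ) l, ← zpow_natCast (p:ℝ) (s*j), ← zpow_neg, ← zpow_add₀ (ne_of_gt hppos)]
    refine one_le_zpow₀ ?_ (by push_cast; omega)
    exact_mod_cast le_of_lt hp.out.one_lt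


section Main

variable {p : ℕ} [hp : Fact p.Prime] {s : ℕ}

lemma norm_p_zpow_neg (j : ℕ) : ‖(p:ℚ_[p])^(-(j:ℤ))‖ = (p:ℝ)^j := by
  rw [Padic.norm_p_zpow]
  simp

lemma norm_p_pow' (m : ℕ) : ‖((p:ℚ_[p]))^m‖ = ((p:ℝ)^m)⁻¹ := by
  rw [Padic.norm_p_pow, zpow_neg, zpow_natCast]

/-- coefficientwise bound 1 is stable under products -/
lemma mv_bd_mul (H K : MvPowerSeries (Fin 2) ℚ_[p])
    (hH : ∀ d, ‖MvPowerSeries.coeff d H‖ ≤ 1)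
    (hK : ∀ d, ‖MvPowerSeries.coeff d K‖ ≤ 1) :
    ∀ d, ‖MvPowerSeries.coeff d (H * K)‖ ≤ 1 := by
  intro d
  rw [MvPowerSeries.coeff_mul]
  apply norm_sum_le_of_forall _ _ _ zero_le_one
  rintro ⟨d1, d2⟩ _
  rw [norm_mul]
  calc ‖MvPowerSeries.coeff d1 H‖ * ‖MvPowerSeries.coeff d2 K‖
      ≤ 1 * 1 := mul_le_mul (hH d1) (hK d2) (norm_nonneg _) zero_le_one
    _ = 1 := one_mul _

lemma mv_bd_pow (M : MvPowerSeries (Fin 2) ℚ_[p])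
    (hM : ∀ d, ‖MvPowerSeries.coeff d M‖ ≤ 1) (r : ℕ) :
    ∀ d, ‖MvPowerSeries.coeff d (M ^ r)‖ ≤ 1 := by
  induction r with
  | zero =>
    intro d
    rw [pow_zero, MvPowerSeries.coeff_one]
    split_ifs <;> simp
  | succ r ih =>
    rw [pow_succ]
    exact mv_bd_mul _ _ ih hM

lemma null_eventually_congr {u v : ℕ → ℚ_[p]} (h : ∃ N, ∀ i ≥ N, u i = v i)
    (hu : NullSeq p u) : NullSeq p v := by
  intro k
  obtain ⟨N0, hN0⟩ := h
  obtain ⟨N, hN⟩ := hu k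
  exact ⟨max N N0, fun i hi => by
    rw [← hN0 i (le_trans (le_max_right _ _) hi)]
    exact hN i (le_trans (le_max_left _ _) hi)⟩

lemma null_neg {u : ℕ → ℚ_[p]} (hu : NullSeq p u) : NullSeq p (fun i => - u i) := by
  intro k
  obtain ⟨N, hN⟩ := hu k
  exact ⟨N, fun i hi => by rw [norm_neg]; exact hN i hi⟩

/-- columns (up to `l`) of powers `M^r`, `r ≥ 2`, are null provided the columns
`1 ≤ m < l` of `M` are null and column `0` of `M` vanishes -/
lemma null_M_pow (M : MvPowerSeries (Fin 2) ℚ_[p]) (l : ℕ)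
    (hbd : ∀ d, ‖MvPowerSeries.coeff d M‖ ≤ 1)
    (h0 : ∀ i, col M 0 i = 0)
    (hlow : ∀ m, 1 ≤ m → m < l → NullSeq p (col M m)) :
    ∀ r, 2 ≤ r → ∀ m ≤ l, NullSeq p (col (M ^ r) m) := by
  have hcolbd : ∀ r m i, ‖col (M ^ r) m i‖ ≤ 1 := fun r m i => mv_bd_pow M hbd r _
  have hMbd : ∀ m i, ‖col M m i‖ ≤ 1 := fun m i => hbd _
  have hcol0pow : ∀ r, 1 ≤ r → ∀ i, col (M ^ r) 0 i = 0 := by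
    intro r hr i
    exact col_pow_vanish M h0 r 0 i (by omega)
  have hMnull : ∀ m, m < l → NullSeq p (col M m) := by
    intro m hm
    rcases Nat.eq_zero_or_pos m with h | h
    · subst h; exact null_congr (fun i => (h0 i).symm) null_zero
    · exact hlow m h hm
  intro r hr
  induction r with
  | zero => omega
  | succ r ih =>
    rcases Nat.lt_or_ge r 2 with hr2 | hr2
    · -- r + 1 = 2, i.e. r = 1 : base case M^2 = M * M
      have hr1 : r = 1 := by omega
      subst hr1
      intro m hm
      rw [pow_succ, pow_one]
      apply null_congr (fun i => (col_mul M M m i).symm)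
      apply null_finsum
      rintro ⟨u, v⟩ huv
      rw [Finset.HasAntidiagonal.mem_antidiagonal] at huv
      rcases Nat.eq_zero_or_pos v with hv | hv
      · apply null_congr (v := fun i => ∑ ab ∈ Finset.HasAntidiagonal.antidiagonal i, col M u ab.1 * col M v ab.2)
          (fun i => ?_) null_zero
        subst hv
        apply (Finset.sum_eq_zero ?_).symm
        rintro ⟨a, b⟩ _
        rw [h0 b, mul_zero]
      rcases Nat.eq_zero_or_pos u with hu | hu
      · apply null_congr (v := fun i => ∑ ab ∈ Finset.HasAntidiagonal.antidiagonal i, col M u ab.1 * col M v ab.2)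
          (fun i => ?_) null_zero
        subst hu
        apply (Finset.sum_eq_zero ?_).symm
        rintro ⟨a, b⟩ _
        rw [h0 a, zero_mul]
      · exact null_conv (fun i => hMbd u i) (fun i => hMbd v i)
          (hMnull u (by omega)) (hMnull v (by omega))
    · -- step : M^(r+1) = M^r * M with r ≥ 2
      intro m hm
      rw [pow_succ]
      apply null_congr (fun i => (col_mul (M^r) M m i).symm)
      apply null_finsum
      rintro ⟨u, v⟩ huv
      rw [Finset.HasAntidiagonal.mem_antidiagonal] at huv
      rcases Nat.eq_zero_or_pos v with hv | hv
      · apply null_congr (v := fun i => ∑ ab ∈ Finset.HasAntidiagonal.antidiagonal i, col (M^r) u ab.1 * col M v ab.2)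
          (fun i => ?_) null_zero
        subst hv
        apply (Finset.sum_eq_zero ?_).symm
        rintro ⟨a, b⟩ _
        rw [h0 b, mul_zero]
      rcases eq_or_lt_of_le (show v ≤ m by omega) with hvm | hvm
      · -- v = m hence u = 0
        have hu : u = 0 := by omega
        apply null_congr (v := fun i => ∑ ab ∈ Finset.HasAntidiagonal.antidiagonal i, col (M^r) u ab.1 * col M v ab.2)
          (fun i => ?_) null_zero
        subst hu
        apply (Finset.sum_eq_zero ?_).symm
        rintro ⟨a, b⟩ _
        rw [hcol0pow r (by omega) a, zero_mul]
      · -- 1 ≤ v < m ≤ l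
        exact null_conv (fun i => hcolbd r u i) (fun i => hMbd v i)
          (ih hr2 u (by omega)) (hMnull v (by omega))

lemma ee_ne_zero {x l : ℕ} (hl : 1 ≤ l) : ee x l ≠ 0 := by
  intro h
  have h1 := congrArg (fun d : Fin 2 →₀ ℕ => d 1) h
  simp only [ee_apply1] at h1
  simp at h1
  omega

lemma expand_pow (G M : MvPowerSeries (Fin 2) ℚ_[p]) (hGM : G = M + MvPowerSeries.X 0)
    (h0 : ∀ i, col M 0 i = 0) (hMG : ∀ m, 1 ≤ m → ∀ i, col M m i = col G m i)
    (l : ℕ) (hl : 1 ≤ l) (N : ℕ) (i : ℕ) :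
    MvPowerSeries.coeff (ee i l) (G ^ N)
      = (if N ≤ i + 1 then (N : ℚ_[p]) * col G l (i + 1 - N) else 0)
        + ∑ r ∈ Finset.Icc 2 l, (N.choose r : ℚ_[p]) *
            (if N ≤ i + r then col (M ^ r) l (i + r - N) else 0) := by
  classical
  set t : ℕ → ℚ_[p] := fun k => (N.choose k : ℚ_[p]) *
    (if N ≤ i + k then col (M ^ k) l (i + k - N) else 0) with ht
  have step1 : MvPowerSeries.coeff (ee i l) (G ^ N) = ∑ k ∈ Finset.range (N+1), t k := by
    rw [hGM, add_pow, map_sum]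
    apply Finset.sum_congr rfl
    intro k hk
    rw [Finset.mem_range] at hk
    have hcast : ((N.choose k : ℕ) : MvPowerSeries (Fin 2) ℚ_[p])
        = MvPowerSeries.C ((N.choose k : ℕ) : ℚ_[p]) :=
      (map_natCast (MvPowerSeries.C) (N.choose k)).symm
    rw [hcast, MvPowerSeries.coeff_mul_C]
    have h2 : MvPowerSeries.coeff (ee i l) (M ^ k * MvPowerSeries.X 0 ^ (N - k))
        = if N - k ≤ i then col (M ^ k) l (i - (N - k)) else 0 :=
      col_mul_X0_pow (M ^ k) (N - k) l i
    rw [h2, ht, mul_comm]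
    congr 1
    by_cases hc : N ≤ i + k
    · rw [if_pos (by omega), if_pos hc]
      congr 1
      omega
    · rw [if_neg (by omega), if_neg hc]
  have step2 : ∑ k ∈ Finset.range (N+1), t k = ∑ k ∈ Finset.range (N+l+1), t k := by
    apply Finset.sum_subset (Finset.range_subset_range.2 (by omega))
    intro k _ hk2
    rw [Finset.mem_range] at hk2
    rw [ht]
    simp only
    rw [Nat.choose_eq_zero_of_lt (by omega), Nat.cast_zero, zero_mul]
  have step3 : ∑ k ∈ Finset.range (N+l+1), t k = ∑ k ∈ Finset.range (l+1), t k := by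
    symm
    apply Finset.sum_subset (Finset.range_subset_range.2 (by omega))
    intro k hk1 hk2
    rw [Finset.mem_range] at hk1 hk2
    have hkl : l < k := by omega
    rw [ht]
    simp only
    rw [col_pow_vanish M h0 k l _ hkl]
    split_ifs <;> simp
  have ht0 : t 0 = 0 := by
    rw [ht]
    simp only [Nat.choose_zero_right, Nat.cast_one, one_mul, pow_zero, add_zero]
    split_ifs with h
    · rw [col, MvPowerSeries.coeff_one, if_neg (ee_ne_zero hl)]
    · rfl
  have ht1 : t 1 = if N ≤ i + 1 then (N : ℚ_[p]) * col G l (i + 1 - N) else 0 := by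
    rw [ht]
    simp only [Nat.choose_one_right, pow_one]
    split_ifs with h
    · rw [hMG l hl]
    · rw [mul_zero]
  obtain ⟨l', rfl⟩ : ∃ l', l = l' + 1 := ⟨l - 1, by omega⟩
  have step4 : ∑ k ∈ Finset.range (l'+1+1), t k
      = t 0 + t 1 + ∑ r ∈ Finset.Icc 2 (l'+1), t r := by
    rw [Finset.sum_range_succ' t (l'+1), Finset.sum_range_succ' (fun j => t (j+1)) l']
    have h5 : ∑ j ∈ Finset.range l', t (j+1+1) = ∑ r ∈ Finset.Icc 2 (l'+1), t r := by
      refine Finset.sum_bij (fun j _ => j + 2) ?_ ?_ ?_ ?_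
      · intro j hj
        rw [Finset.mem_range] at hj
        show j + 2 ∈ Finset.Icc 2 (l'+1)
        rw [Finset.mem_Icc]
        omega
      · intro a _ b _ hab
        omega
      · intro r hr
        rw [Finset.mem_Icc] at hr
        refine ⟨r - 2, Finset.mem_range.2 (by omega), ?_⟩
        show r - 2 + 2 = r
        omega
      · intro j _
        show t (j + 1 + 1) = t (j + 2)
        norm_num
    rw [h5]
    ring
  rw [step1, step2, step3, step4, ht0, ht1]
  ring

lemma norm_sub_le_max (a b : ℚ_[p]) : ‖a - b‖ ≤ max ‖a‖ ‖b‖ := by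
  rw [sub_eq_add_neg]
  refine le_trans (Padic.nonarchimedean a (-b)) ?_
  rw [norm_neg]

lemma contraction (hs : 2 ≤ s) (c B : ℕ → ℚ_[p]) (l : ℕ)
    (hbd : ∀ i, ‖c i‖ ≤ 1) (hB : NullSeq p B)
    (hrec : ∀ i, 1 ≤ i → c i = B i - ∑ j ∈ Finset.range (i + l),
      (if p ^ (s * (j+1)) ≤ i + 1
        then (p:ℚ_[p])^((s-1)*(j+1)) * c (i + 1 - p ^ (s*(j+1))) else 0)) :
    NullSeq p c := by
  intro k
  induction k with
  | zero =>
    refine ⟨0, fun i _ => ?_⟩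
    simpa using hbd i
  | succ k ih =>
    obtain ⟨Nk, hNk⟩ := ih
    obtain ⟨NB, hNB⟩ := hB (k+1)
    refine ⟨max NB (Nk + p ^ (s*(k+1))) + 1, fun i hi => ?_⟩
    have hi1 : 1 ≤ i := by omega
    rw [hrec i hi1]
    refine le_trans (norm_sub_le_max _ _) (max_le ?_ ?_)
    · exact hNB i (by omega)
    · apply norm_sum_le_of_forall _ _ _ (le_of_lt (inv_pos.2 (ppow_pos (k+1))))
      intro j _
      split_ifs with hc
      · rw [norm_mul, norm_p_pow']
        rcases le_or_gt (k+1) (j+1) with h | h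
        · calc ((p:ℝ)^((s-1)*(j+1)))⁻¹ * ‖c (i + 1 - p ^ (s*(j+1)))‖
              ≤ ((p:ℝ)^((s-1)*(j+1)))⁻¹ * 1 :=
                mul_le_mul_of_nonneg_left (hbd _) (le_of_lt (inv_pos.2 (ppow_pos _)))
            _ = ((p:ℝ)^((s-1)*(j+1)))⁻¹ := mul_one _
            _ ≤ ((p:ℝ)^(k+1))⁻¹ := ppow_inv_le
                (by have := Nat.le_mul_of_pos_left (j+1) (show 0 < s-1 by omega); omega)
        · have harg : Nk ≤ i + 1 - p ^ (s*(j+1)) := by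
            have hle : p ^ (s*(j+1)) ≤ p ^ (s*(k+1)) :=
              Nat.pow_le_pow_right hp.out.pos
                (by have := Nat.mul_le_mul_left s (show j+1 ≤ k+1 by omega); omega)
            omega
          calc ((p:ℝ)^((s-1)*(j+1)))⁻¹ * ‖c (i + 1 - p ^ (s*(j+1)))‖
              ≤ ((p:ℝ)^1)⁻¹ * ((p:ℝ)^k)⁻¹ := by
                apply mul_le_mul (ppow_inv_le
                    (by have := Nat.mul_pos (show 0 < s-1 by omega) (show 0 < j+1 by omega); omega))
                  (hNk _ harg)
                  (norm_nonneg _) (le_of_lt (inv_pos.2 (ppow_pos 1)))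
            _ = ((p:ℝ)^(k+1))⁻¹ := by
                rw [← mul_inv, ← pow_add]
                congr 2
                omega
      · simp only [norm_zero]
        exact le_of_lt (inv_pos.2 (ppow_pos (k+1)))

lemma idX (hs : 0 < s) (n : ℕ) :
    ∑ j ∈ Finset.range (n+1), (if p ^ (s*j) ≤ n
      then (p:ℚ_[p])^(-(j:ℤ)) *
        PowerSeries.coeff n ((PowerSeries.X : PowerSeries ℚ_[p]) ^ (p ^ (s*j)))
      else 0) = φ p s n := by
  classical
  by_cases h : ∃ j0, n = p ^ (s * j0)
  · obtain ⟨j0, hj0⟩ := h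
    have hj0n : j0 < n + 1 := by
      have := sj_lt_self (p := p) hs j0
      omega
    rw [Finset.sum_eq_single j0]
    · rw [if_pos (by omega), PowerSeries.coeff_X_pow, if_pos hj0, mul_one, hj0, φ_pow hs]
    · intro j _ hj
      split_ifs with hc
      · rw [PowerSeries.coeff_X_pow, if_neg, mul_zero]
        intro hcon
        exact hj (pow_sj_inj (p := p) hs
          (show p ^ (s*j) = p ^ (s*j0) by omega))
      · rfl
    · intro hcon
      exact absurd (Finset.mem_range.2 hj0n) hcon
  · rw [φ_not h]
    apply Finset.sum_eq_zero
    intro j _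
    split_ifs with hc
    · rw [PowerSeries.coeff_X_pow, if_neg (fun hcon => h ⟨j, hcon⟩), mul_zero]
    · rfl

lemma ee_zero : ee 0 0 = (0 : Fin 2 →₀ ℕ) := by
  simp [ee]

lemma col0_X (hs : 0 < s) (G : MvPowerSeries (Fin 2) ℚ_[p])
    (hG0 : MvPowerSeries.coeff 0 G = 0)
    (hid : ∀ i : ℕ, ∑ j ∈ Finset.range (i+1), (if p ^ (s*j) ≤ i
      then (p:ℚ_[p])^(-(j:ℤ)) *
        PowerSeries.coeff i ((PowerSeries.mk (col G 0)) ^ (p ^ (s*j)))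
      else 0) = φ p s i) :
    ∀ n, col G 0 n = PowerSeries.coeff n (PowerSeries.X : PowerSeries ℚ_[p]) := by
  intro n
  induction n using Nat.strong_induction_on with
  | _ n IH =>
    rcases Nat.eq_zero_or_pos n with rfl | hn
    · rw [col, ee_zero, hG0, PowerSeries.coeff_zero_X]
    -- n ≥ 1 : compare hid n with idX n
    have hXid := idX (p := p) hs n
    have hGid := hid n
    rw [Finset.sum_range_succ' _ n] at hXid hGid
    have hsame : ∀ j ∈ Finset.range n,
        (if p ^ (s*(j+1)) ≤ n then (p:ℚ_[p])^(-((j+1:ℕ):ℤ)) *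
          PowerSeries.coeff n ((PowerSeries.mk (col G 0)) ^ (p ^ (s*(j+1)))) else 0)
        = (if p ^ (s*(j+1)) ≤ n then (p:ℚ_[p])^(-((j+1:ℕ):ℤ)) *
          PowerSeries.coeff n ((PowerSeries.X : PowerSeries ℚ_[p]) ^ (p ^ (s*(j+1)))) else 0) := by
      intro j _
      split_ifs with hc
      · congr 1
        apply pow_coeff_agree
        · rw [PowerSeries.constantCoeff_mk, col, ee_zero]
          exact hG0
        · exact PowerSeries.constantCoeff_X
        · have h2 : p ^ 1 ≤ p ^ (s * (j+1)) :=
            Nat.pow_le_pow_right hp.out.pos (by have := Nat.le_mul_of_pos_left (j+1) hs; omega)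
          rw [pow_one] at h2
          have := hp.out.two_le
          omega
        · intro k hk
          rw [PowerSeries.coeff_mk]
          exact IH k hk
      · rfl
    rw [Finset.sum_congr rfl hsame] at hGid
    have hj0G : (if p ^ (s*0) ≤ n then (p:ℚ_[p])^(-((0:ℕ):ℤ)) *
        PowerSeries.coeff n ((PowerSeries.mk (col G 0)) ^ (p ^ (s*0))) else 0)
        = col G 0 n := by
      rw [if_pos (by rw [mul_zero, pow_zero]; omega)]
      simp [PowerSeries.coeff_mk]
    have hj0X : (if p ^ (s*0) ≤ n then (p:ℚ_[p])^(-((0:ℕ):ℤ)) *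
        PowerSeries.coeff n ((PowerSeries.X : PowerSeries ℚ_[p]) ^ (p ^ (s*0))) else 0)
        = PowerSeries.coeff n (PowerSeries.X : PowerSeries ℚ_[p]) := by
      rw [if_pos (by rw [mul_zero, pow_zero]; omega)]
      simp
    rw [hj0G] at hGid
    rw [hj0X] at hXid
    have := hGid.trans hXid.symm
    exact add_left_cancel this

lemma cast_p_ne_zero : ((p:ℚ_[p])) ≠ 0 := Nat.cast_ne_zero.2 hp.out.pos.ne'

lemma hqid (hs1 : 1 ≤ s) (j : ℕ) :
    (p:ℚ_[p])^(-(j:ℤ)) * ((p^(s*j) : ℕ) : ℚ_[p]) = (p:ℚ_[p])^((s-1)*j) := by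
  have h1 : ((p^(s*j) : ℕ) : ℚ_[p]) = (p:ℚ_[p])^(s*j) := by push_cast; ring
  rw [h1, ← zpow_natCast (p:ℚ_[p]) (s*j), ← zpow_add₀ (cast_p_ne_zero (p := p)),
    ← zpow_natCast (p:ℚ_[p]) ((s-1)*j)]
  congr 1
  have h2 : (s-1)*j = s*j - j := by
    rw [Nat.sub_mul, one_mul]
  have h3 : j ≤ s * j := Nat.le_mul_of_pos_left j (by omega)
  omega

lemma main_null (hs2 : 2 ≤ s) (G M : MvPowerSeries (Fin 2) ℚ_[p])
    (hGM : G = M + MvPowerSeries.X 0)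
    (hGbd : ∀ d, ‖MvPowerSeries.coeff d G‖ ≤ 1)
    (hMbd : ∀ d, ‖MvPowerSeries.coeff d M‖ ≤ 1)
    (hM0 : ∀ i, col M 0 i = 0)
    (hMG : ∀ m, 1 ≤ m → ∀ i, col M m i = col G m i)
    (hcol0 : NullSeq p (col G 0))
    (hID : ∀ l, 1 ≤ l → ∀ i, 1 ≤ i →
      ∑ j ∈ Finset.range (i+l+1), (if p^(s*j) ≤ i+l
        then (p:ℚ_[p])^(-(j:ℤ)) * MvPowerSeries.coeff (ee i l) (G ^ (p^(s*j))) else 0) = 0) :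
    ∀ l, NullSeq p (col G l) := by
  intro l
  induction l using Nat.strong_induction_on with
  | _ l IH =>
  rcases Nat.eq_zero_or_pos l with rfl | hl
  · exact hcol0
  set S2 : ℕ → ℕ → ℚ_[p] := fun j i =>
    if p^(s*j) ≤ i + l then (p:ℚ_[p])^(-(j:ℤ)) *
      ∑ r ∈ Finset.Icc 2 l, ((p^(s*j)).choose r : ℚ_[p]) *
        (if p^(s*j) ≤ i + r then col (M^r) l (i + r - p^(s*j)) else 0)
    else 0 with hS2
  set S1 : ℕ → ℕ → ℚ_[p] := fun j i =>
    if p^(s*j) ≤ i + 1 then (p:ℚ_[p])^((s-1)*j) * col G l (i + 1 - p^(s*j)) else 0 with hS1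
  set B : ℕ → ℚ_[p] := fun i => - ∑ j ∈ Finset.range (i+l+1), S2 j i with hB
  -- rewrite the identity into S1/S2 form
  have key : ∀ i, 1 ≤ i →
      col G l i = B i - ∑ j ∈ Finset.range (i + l),
        (if p ^ (s*(j+1)) ≤ i+1
          then (p:ℚ_[p])^((s-1)*(j+1)) * col G l (i+1-p^(s*(j+1))) else 0) := by
    intro i hi
    show col G l i = B i - ∑ j ∈ Finset.range (i + l), S1 (j+1) i
    have hid := hID l hl i hi
    have hpt : ∀ j ∈ Finset.range (i+l+1),
        (if p^(s*j) ≤ i+l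
          then (p:ℚ_[p])^(-(j:ℤ)) * MvPowerSeries.coeff (ee i l) (G ^ (p^(s*j))) else 0)
        = S1 j i + S2 j i := by
      intro j _
      rw [expand_pow G M hGM hM0 hMG l hl (p^(s*j)) i]
      rw [hS1, hS2]
      simp only
      by_cases h1 : p^(s*j) ≤ i + 1
      · rw [if_pos (by omega), if_pos h1, if_pos h1, if_pos (by omega), mul_add]
        congr 1
        rw [← mul_assoc, hqid (by omega) j]
      · rw [if_neg h1, if_neg h1]
        by_cases h2 : p^(s*j) ≤ i + l
        · rw [if_pos h2, if_pos h2, zero_add, zero_add]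
        · rw [if_neg h2, if_neg h2, zero_add]
    rw [Finset.sum_congr rfl hpt, Finset.sum_add_distrib] at hid
    -- extract the j = 0 term of the S1-sum
    rw [Finset.sum_range_succ' (fun j => S1 j i) (i+l)] at hid
    have hS10 : S1 0 i = col G l i := by
      rw [hS1]
      simp
    rw [hS10] at hid
    have hgoal : col G l i = - (∑ j ∈ Finset.range (i+l+1), S2 j i)
        - ∑ j ∈ Finset.range (i+l), S1 (j+1) i := by
      linear_combination hid
    simpa only [hB] using hgoal
  -- B is a null sequence
  have hBnull : NullSeq p B := by
    rw [hB]
    apply null_neg (u := fun i => ∑ j ∈ Finset.range (i+l+1), S2 j i)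
    apply null_triangular S2 (p^l) ?_ ?_ (fun i => i + l + 1)
    · -- bound
      intro j i
      rw [hS2]
      simp only
      split_ifs with h
      · rw [norm_mul, norm_p_zpow_neg]
        have hsum : ‖∑ r ∈ Finset.Icc 2 l, ((p^(s*j)).choose r : ℚ_[p]) *
            (if p^(s*j) ≤ i + r then col (M^r) l (i + r - p^(s*j)) else 0)‖
            ≤ (p:ℝ)^l * ((p:ℝ)^(s*j))⁻¹ := by
          apply norm_sum_le_of_forall _ _ _ (by positivity)
          intro r hr
          rw [Finset.mem_Icc] at hr
          rw [norm_mul]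
          have h1 := norm_choose_le (p := p) (s := s) j r l (by omega) hr.2
          have h2 : ‖(if p^(s*j) ≤ i + r then col (M^r) l (i + r - p^(s*j)) else 0)‖ ≤ 1 := by
            split_ifs
            · exact mv_bd_pow M hMbd r _
            · simp
          calc ‖(((p ^ (s * j)).choose r : ℕ) : ℚ_[p])‖ * ‖(if p^(s*j) ≤ i + r then col (M^r) l (i + r - p^(s*j)) else 0)‖
              ≤ ((p:ℝ)^l * ((p:ℝ)^(s*j))⁻¹) * 1 :=
                mul_le_mul h1 h2 (norm_nonneg _) (by positivity)
            _ = (p:ℝ)^l * ((p:ℝ)^(s*j))⁻¹ := mul_one _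
        calc (p:ℝ)^j * ‖∑ r ∈ Finset.Icc 2 l, ((p^(s*j)).choose r : ℚ_[p]) *
              (if p^(s*j) ≤ i + r then col (M^r) l (i + r - p^(s*j)) else 0)‖
            ≤ (p:ℝ)^j * ((p:ℝ)^l * ((p:ℝ)^(s*j))⁻¹) :=
              mul_le_mul_of_nonneg_left hsum (by positivity)
          _ = (p:ℝ)^l * ((p:ℝ)^j * ((p:ℝ)^(s*j))⁻¹) := by ring
          _ ≤ ((p^l : ℕ):ℝ) * ((p:ℝ)^j)⁻¹ := by
              rw [Nat.cast_pow]
              apply mul_le_mul_of_nonneg_left ?_ (by positivity)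
              have hsj : s*j = j + (s*j - j) := by
                have := Nat.le_mul_of_pos_left j (show 0 < s by omega)
                omega
              rw [hsj, pow_add, mul_inv, ← mul_assoc,
                mul_inv_cancel₀ (ne_of_gt (ppow_pos j)), one_mul]
              apply ppow_inv_le
              have h2j : 2*j ≤ s*j := Nat.mul_le_mul_right j hs2
              omega
      · simp only [norm_zero]
        positivity
    · -- rows are null
      intro j
      have hlow : ∀ m, 1 ≤ m → m < l → NullSeq p (col M m) := by
        intro m h1 h2
        exact null_congr (fun i => (hMG m h1 i).symm) (IH m h2)
      have hrow : NullSeq p (fun i => (p:ℚ_[p])^(-(j:ℤ)) *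
          ∑ r ∈ Finset.Icc 2 l, ((p^(s*j)).choose r : ℚ_[p]) *
            col (M^r) l (i + r - p^(s*j))) := by
        apply null_scale
        have : (fun i => ∑ r ∈ Finset.Icc 2 l, ((p^(s*j)).choose r : ℚ_[p]) *
            col (M^r) l (i + r - p^(s*j)))
            = fun i => ∑ r ∈ Finset.Icc 2 l, (fun i' => ((p^(s*j)).choose r : ℚ_[p]) *
              col (M^r) l (i' + r - p^(s*j))) i := rfl
        rw [this]
        apply null_finsum
        intro r hr
        rw [Finset.mem_Icc] at hr
        apply null_scale
        apply null_comp
        exact null_M_pow M l hMbd hM0 hlow r hr.1 l le_rfl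
      apply null_eventually_congr ?_ hrow
      refine ⟨p^(s*j), fun i hi => ?_⟩
      rw [hS2]
      simp only
      rw [if_pos (by omega)]
      congr 1
      apply Finset.sum_congr rfl
      intro r hr
      rw [Finset.mem_Icc] at hr
      rw [if_pos (by omega)]
  exact contraction hs2 (col G l) B l (fun i => hGbd _) hBnull key

lemma ee_eq_single0 {i l n : ℕ} : ee i l = Finsupp.single (0:Fin 2) n ↔ (i = n ∧ l = 0) := by
  have h1 : Finsupp.single (0:Fin 2) n = ee n 0 := by simp [ee]
  rw [h1]
  constructor
  · intro h; exact ee_inj h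
  · rintro ⟨rfl, rfl⟩; rfl

lemma ee_eq_single1 {i l n : ℕ} : ee i l = Finsupp.single (1:Fin 2) n ↔ (i = 0 ∧ l = n) := by
  have h1 : Finsupp.single (1:Fin 2) n = ee 0 n := by simp [ee]
  rw [h1]
  constructor
  · intro h; exact ee_inj h
  · rintro ⟨rfl, rfl⟩; rfl

lemma sum_pow_X0 (i l : ℕ) (g : ℕ → ℚ_[p]) :
    ∑ n ∈ Finset.range (i + l + 1), g n * MvPowerSeries.coeff (ee i l)
      ((MvPowerSeries.X (0:Fin 2) : MvPowerSeries (Fin 2) ℚ_[p]) ^ n)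
    = if l = 0 then g i else 0 := by
  classical
  have hcoeff : ∀ n, MvPowerSeries.coeff (ee i l) ((MvPowerSeries.X (0:Fin 2) : MvPowerSeries (Fin 2) ℚ_[p]) ^ n)
      = if i = n ∧ l = 0 then 1 else 0 := by
    intro n
    rw [MvPowerSeries.coeff_X_pow]
    by_cases h : ee i l = Finsupp.single (0:Fin 2) n
    · rw [if_pos h, if_pos (ee_eq_single0.1 h)]
    · rw [if_neg h, if_neg (fun hc => h (ee_eq_single0.2 hc))]
  by_cases hl : l = 0
  · subst hl
    rw [if_pos rfl]
    rw [Finset.sum_eq_single i]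
    · rw [hcoeff, if_pos ⟨rfl, rfl⟩, mul_one]
    · intro n _ hn
      rw [hcoeff, if_neg (fun hc => hn hc.1.symm), mul_zero]
    · intro hc
      exact absurd (Finset.mem_range.2 (by omega)) hc
  · rw [if_neg hl]
    apply Finset.sum_eq_zero
    intro n _
    rw [hcoeff, if_neg (fun hc => hl hc.2), mul_zero]

lemma sum_pow_X1 (i l : ℕ) (g : ℕ → ℚ_[p]) :
    ∑ n ∈ Finset.range (i + l + 1), g n * MvPowerSeries.coeff (ee i l)
      ((MvPowerSeries.X (1:Fin 2) : MvPowerSeries (Fin 2) ℚ_[p]) ^ n)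
    = if i = 0 then g l else 0 := by
  classical
  have hcoeff : ∀ n, MvPowerSeries.coeff (ee i l) ((MvPowerSeries.X (1:Fin 2) : MvPowerSeries (Fin 2) ℚ_[p]) ^ n)
      = if i = 0 ∧ l = n then 1 else 0 := by
    intro n
    rw [MvPowerSeries.coeff_X_pow]
    by_cases h : ee i l = Finsupp.single (1:Fin 2) n
    · rw [if_pos h, if_pos (ee_eq_single1.1 h)]
    · rw [if_neg h, if_neg (fun hc => h (ee_eq_single1.2 hc))]
  by_cases hi : i = 0
  · subst hi
    rw [if_pos rfl]
    rw [Finset.sum_eq_single l]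
    · rw [hcoeff, if_pos ⟨rfl, rfl⟩, mul_one]
    · intro n _ hn
      rw [hcoeff, if_neg (fun hc => hn hc.2.symm), mul_zero]
    · intro hc
      exact absurd (Finset.mem_range.2 (by omega)) hc
  · rw [if_neg hi]
    apply Finset.sum_eq_zero
    intro n _
    rw [hcoeff, if_neg (fun hc => hi hc.1), mul_zero]

lemma collapse_coeff (hs0 : 0 < s) (G : MvPowerSeries (Fin 2) ℚ_[p]) (i l : ℕ) :
    ∑ n ∈ Finset.range (i + l + 1), φ p s n * MvPowerSeries.coeff (ee i l) (G ^ n)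
      = ∑ j ∈ Finset.range (i + l + 1), if p ^ (s*j) ≤ i + l
          then (p:ℚ_[p])^(-(j:ℤ)) * MvPowerSeries.coeff (ee i l) (G ^ (p ^ (s*j))) else 0 :=
  collapse hs0 (i+l) (fun n => MvPowerSeries.coeff (ee i l) (G ^ n))

end Main

end HondaAux

/-- For `s > 1`, the Honda formal group law `F(x,y)` lies in `𝔽_p[x][[y]]`:
writing `F(x,y) = Σ_l A_l(x) yˡ`, each `A_l` is a polynomial in `x`, i.e. for each `l`
only finitely many coefficients of `xⁱ yˡ` in `F` are nonzero. -/
theorem honda_polynomial_in_x (p : ℕ) [Fact p.Prime] (s : ℕ) (hs : 1 < s)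
    (F : MvPowerSeries (Fin 2) (ZMod p)) (hF : IsHondaFGL p s F) :
    ∀ l : ℕ,
      {i : ℕ |
        MvPowerSeries.coeff (Finsupp.single (0 : Fin 2) i + Finsupp.single 1 l) F
          ≠ 0}.Finite := by
  classical
  intro l
  obtain ⟨F₀, h00, heq, hFdef⟩ := hF
  set G : MvPowerSeries (Fin 2) ℚ_[p] :=
    MvPowerSeries.map (PadicInt.Coe.ringHom (p := p)) F₀ with hGdef
  have hs0 : 0 < s := by omega
  have hGcoe : ∀ d, MvPowerSeries.coeff d G
      = ((MvPowerSeries.coeff d F₀ : ℤ_[p]) : ℚ_[p]) := by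
    intro d
    rw [hGdef, MvPowerSeries.coeff_map]
    rfl
  have hGbd : ∀ d, ‖MvPowerSeries.coeff d G‖ ≤ 1 := by
    intro d
    rw [hGcoe d, PadicInt.padic_norm_e_of_padicInt]
    exact PadicInt.norm_le_one _
  have hG0 : MvPowerSeries.coeff 0 G = 0 := by
    rw [hGcoe 0]
    rw [show MvPowerSeries.coeff 0 F₀
        = MvPowerSeries.constantCoeff F₀ from rfl, h00]
    simp
  -- the master functional-equation identity, coefficientwise
  have hmaster : ∀ d : Fin 2 →₀ ℕ,
      (∑ n ∈ Finset.range (d.sum (fun _ k => k) + 1),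
        HondaAux.φ p s n * MvPowerSeries.coeff d (G ^ n))
      = (∑ n ∈ Finset.range (d.sum (fun _ k => k) + 1),
          HondaAux.φ p s n * MvPowerSeries.coeff d
            ((MvPowerSeries.X (0:Fin 2) : MvPowerSeries (Fin 2) ℚ_[p]) ^ n))
        + (∑ n ∈ Finset.range (d.sum (fun _ k => k) + 1),
          HondaAux.φ p s n * MvPowerSeries.coeff d
            ((MvPowerSeries.X (1:Fin 2) : MvPowerSeries (Fin 2) ℚ_[p]) ^ n)) :=
    fun d => congrFun heq d
  -- column 0 of G is X
  have hid0 : ∀ i : ℕ, ∑ j ∈ Finset.range (i+1), (if p^(s*j) ≤ i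
      then (p:ℚ_[p])^(-(j:ℤ)) * PowerSeries.coeff i
        ((PowerSeries.mk (HondaAux.col G 0)) ^ (p^(s*j))) else 0)
      = HondaAux.φ p s i := by
    intro i
    have h := hmaster (HondaAux.ee i 0)
    rw [HondaAux.ee_sum] at h
    rw [HondaAux.sum_pow_X0 i 0 (HondaAux.φ p s), HondaAux.sum_pow_X1 i 0 (HondaAux.φ p s), if_pos rfl] at h
    have hrhs : (if i = 0 then HondaAux.φ p s 0 else 0) = 0 := by
      split_ifs
      · exact HondaAux.φ_zero
      · rfl
    rw [HondaAux.collapse_coeff hs0 G i 0, hrhs, add_zero (HondaAux.φ p s i)] at h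
    rw [← h]
    simp only [Nat.add_zero]
    apply Finset.sum_congr rfl
    intro j _
    split_ifs with hc
    · congr 1
      exact (HondaAux.col0_pow G (p^(s*j)) i).symm
    · rfl
  have hA0 := HondaAux.col0_X hs0 G hG0 hid0
  have hcol0 : HondaAux.NullSeq p (HondaAux.col G 0) := by
    intro k
    refine ⟨2, fun i hi => ?_⟩
    rw [hA0 i, PowerSeries.coeff_X, if_neg (by omega)]
    rw [norm_zero]
    positivity
  -- M = G - X₀ and its properties
  set M : MvPowerSeries (Fin 2) ℚ_[p] := G - MvPowerSeries.X 0 with hMdef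
  have hGM : G = M + MvPowerSeries.X 0 := by
    rw [hMdef]
    ring
  have hX0coeff : ∀ a m : ℕ,
      MvPowerSeries.coeff (HondaAux.ee a m) (MvPowerSeries.X (0:Fin 2))
        = if a = 1 ∧ m = 0 then 1 else 0 := by
    intro a m
    rw [MvPowerSeries.coeff_X]
    by_cases h : HondaAux.ee a m = Finsupp.single (0:Fin 2) 1
    · rw [if_pos h, if_pos (HondaAux.ee_eq_single0.1 h)]
    · rw [if_neg h, if_neg (fun hc => h (HondaAux.ee_eq_single0.2 hc))]
  have hMbd : ∀ d, ‖MvPowerSeries.coeff d M‖ ≤ 1 := by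
    intro d
    rw [hMdef, map_sub]
    refine le_trans (HondaAux.norm_sub_le_max _ _) (max_le (hGbd d) ?_)
    rw [MvPowerSeries.coeff_X]
    split_ifs
    · rw [norm_one]
    · rw [norm_zero]
      exact zero_le_one
  have hM0 : ∀ i, HondaAux.col M 0 i = 0 := by
    intro i
    have h1 : MvPowerSeries.coeff (HondaAux.ee i 0) G = if i = 1 then 1 else 0 := by
      have h2 := hA0 i
      rw [PowerSeries.coeff_X] at h2
      exact h2
    show MvPowerSeries.coeff (HondaAux.ee i 0) M = 0
    rw [hMdef, map_sub, h1, MvPowerSeries.coeff_X]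
    simp [HondaAux.ee_eq_single0]
  have hMG : ∀ m, 1 ≤ m → ∀ i, HondaAux.col M m i = HondaAux.col G m i := by
    intro m hm i
    show MvPowerSeries.coeff (HondaAux.ee i m) M
      = MvPowerSeries.coeff (HondaAux.ee i m) G
    rw [hMdef, map_sub, MvPowerSeries.coeff_X,
      if_neg (fun hc => by have := HondaAux.ee_eq_single0.1 hc; omega), sub_zero]
  -- the functional equation for columns l ≥ 1
  have hID : ∀ l', 1 ≤ l' → ∀ i, 1 ≤ i →
      ∑ j ∈ Finset.range (i+l'+1), (if p^(s*j) ≤ i+l'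
        then (p:ℚ_[p])^(-(j:ℤ)) *
          MvPowerSeries.coeff (HondaAux.ee i l') (G ^ (p^(s*j))) else 0) = 0 := by
    intro l' hl' i hi
    have h := hmaster (HondaAux.ee i l')
    rw [HondaAux.ee_sum] at h
    rw [HondaAux.collapse_coeff hs0 G i l',
      HondaAux.sum_pow_X0 i l' (HondaAux.φ p s), HondaAux.sum_pow_X1 i l' (HondaAux.φ p s),
      if_neg (by omega), if_neg (by omega),
      add_zero ((0:ℚ_[p]))] at h
    exact h
  -- all columns of G are null sequences
  have hnull := HondaAux.main_null (show 2 ≤ s by omega) G M hGM hGbd hMbd hM0 hMG hcol0 hID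
  obtain ⟨N, hN⟩ := hnull l 1
  apply Set.Finite.subset (Set.finite_Iio N)
  intro i hi
  rw [Set.mem_Iio]
  by_contra hc
  push_neg at hc
  apply hi
  -- i ≥ N : show the coefficient of F vanishes
  have hnorm : ‖MvPowerSeries.coeff (HondaAux.ee i l) F₀‖ < 1 := by
    have h1 := hN i hc
    rw [show HondaAux.col G l i
        = MvPowerSeries.coeff (HondaAux.ee i l) G from rfl, hGcoe,
      PadicInt.padic_norm_e_of_padicInt] at h1
    refine lt_of_le_of_lt h1 ?_
    rw [pow_one]
    apply inv_lt_one_of_one_lt₀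
    exact_mod_cast (Fact.out : p.Prime).one_lt
  have hker : (PadicInt.toZMod (p := p)) (MvPowerSeries.coeff (HondaAux.ee i l) F₀) = 0 := by
    rw [← RingHom.mem_ker, PadicInt.ker_toZMod, PadicInt.maximalIdeal_eq_span_p,
      Ideal.mem_span_singleton]
    exact (PadicInt.norm_lt_one_iff_dvd _).1 hnorm
  show MvPowerSeries.coeff
    (Finsupp.single (0 : Fin 2) i + Finsupp.single 1 l) F = 0
  rw [hFdef, MvPowerSeries.coeff_map]
  exact hker
end

section
/- Let p be a prime and s > 1 an integer, and set q = p^{s-1}. Let F ∈ F_p[[x,y]] be the Honda formal group law of height s. Then F(x,y) ≡ x + y modulo the ideal (y^q) of F_p[[x,y]]; that is, every coefficient α_{ij} of x^i y^j in F with j < q vanishes except α_{1,0} = α_{0,1} = 1. -/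
open MvPowerSeries Finsupp
open scoped Classical

section HondaAux

variable {p : ℕ} [hp : Fact p.Prime]
local notation "K" => ℚ_[p]

lemma hl_coeff_zero (s : ℕ) : PowerSeries.coeff 0 (hondaLog p s) = 0 := by
  rw [hondaLog, PowerSeries.coeff_mk, dif_neg]
  rintro ⟨i, hi⟩
  exact absurd hi.symm (pow_pos hp.out.pos _).ne'

lemma hl_coeff_one (s : ℕ) : PowerSeries.coeff 1 (hondaLog p s) = 1 := by
  rw [hondaLog, PowerSeries.coeff_mk]
  have h : ∃ i, 1 = p ^ (s * i) := ⟨0, by simp⟩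
  rw [dif_pos h]
  have : Nat.find h = 0 := Nat.le_zero.mp (Nat.find_le (by simp))
  rw [this]; simp

lemma hl_coeff_of_ne (s m : ℕ) (h : ∀ i, m ≠ p ^ (s * i)) :
    PowerSeries.coeff m (hondaLog p s) = 0 := by
  rw [hondaLog, PowerSeries.coeff_mk, dif_neg]
  rintro ⟨i, hi⟩; exact h i hi

lemma hl_coeff_pow (s : ℕ) (hs : 1 ≤ s) (i : ℕ) :
    PowerSeries.coeff (p ^ (s * i)) (hondaLog p s) = (p : ℚ_[p]) ^ (-(i:ℤ)) := by
  rw [hondaLog, PowerSeries.coeff_mk]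
  have h : ∃ j, p ^ (s * i) = p ^ (s * j) := ⟨i, rfl⟩
  rw [dif_pos h]
  have hfind : Nat.find h = i := by
    rw [Nat.find_eq_iff]
    refine ⟨rfl, fun j hj hne => ?_⟩
    have := Nat.pow_right_injective hp.out.two_le hne
    have : i = j := Nat.eq_of_mul_eq_mul_left (lt_of_lt_of_le Nat.zero_lt_one hs) this
    omega
  rw [hfind]

lemma pow_dvd_mul_choose (n k : ℕ) (hk : 1 ≤ k) : p ^ n ∣ k * Nat.choose (p ^ n) k := by
  obtain ⟨k, rfl⟩ : ∃ m, k = m + 1 := ⟨k - 1, by omega⟩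
  have hpos : 1 ≤ p ^ n := Nat.one_le_pow _ _ hp.out.pos
  have := Nat.add_one_mul_choose_eq (p ^ n - 1) k
  rw [Nat.sub_add_cancel hpos] at this
  exact ⟨Nat.choose (p ^ n - 1) k, by rw [mul_comm (k+1)]; omega⟩

lemma factorization_le_of_lt_pow {k t : ℕ} (hk : 1 ≤ k) (h : k < p ^ t) :
    k.factorization p + 1 ≤ t := by
  have h1 : p ^ (k.factorization p) ∣ k := Nat.ordProj_dvd k p
  have h2 : p ^ (k.factorization p) ≤ k := Nat.le_of_dvd hk h1
  by_contra hc
  exact absurd (Nat.pow_le_pow_right hp.out.pos (by omega)) (by omega : ¬ p ^ t ≤ p ^ (k.factorization p))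

lemma pow_dvd_choose_pow {n k v : ℕ} (hk : 1 ≤ k) (hv : k.factorization p ≤ v) (hvn : v ≤ n) :
    p ^ (n - v) ∣ Nat.choose (p ^ n) k := by
  rcases Nat.eq_zero_or_pos (Nat.choose (p ^ n) k) with h | h
  · simp [h]
  have hd := pow_dvd_mul_choose (p := p) n k hk
  have hne : k * Nat.choose (p ^ n) k ≠ 0 := by positivity
  have hfac : n ≤ (k * Nat.choose (p ^ n) k).factorization p :=
    (Nat.Prime.pow_dvd_iff_le_factorization hp.out hne).mp hd
  rw [Nat.factorization_mul (by omega) (by omega)] at hfac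
  have : n - v ≤ (Nat.choose (p ^ n) k).factorization p := by
    have := Finsupp.add_apply (k.factorization) ((Nat.choose (p ^ n) k).factorization) p
    omega
  exact (Nat.Prime.pow_dvd_iff_le_factorization hp.out (by omega)).mpr this

lemma norm_nat_le_pow {a m : ℕ} (h : p ^ m ∣ a) : ‖(a : ℚ_[p])‖ ≤ (p:ℝ) ^ (-(m:ℤ)) := by
  have := (Padic.norm_int_le_pow_iff_dvd (a : ℤ) m).mpr (by exact_mod_cast h)
  exact_mod_cast this

lemma norm_nat_le_one (a : ℕ) : ‖(a : ℚ_[p])‖ ≤ 1 := by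
  have := Padic.norm_int_le_one (p := p) (a : ℤ)
  exact_mod_cast this

lemma norm_choose_le {n k v : ℕ} (hk : 1 ≤ k) (hv : k.factorization p ≤ v) :
    ‖(Nat.choose (p ^ n) k : ℚ_[p])‖ ≤ (p:ℝ) ^ (-(n:ℤ) + v) := by
  rcases le_or_gt v n with hvn | hvn
  · have h1 : ‖(Nat.choose (p ^ n) k : ℚ_[p])‖ ≤ (p:ℝ) ^ (-((n - v : ℕ):ℤ)) :=
      norm_nat_le_pow (pow_dvd_choose_pow hk hv hvn)
    have h2 : (-((n - v : ℕ):ℤ)) = -(n:ℤ) + v := by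
      push_cast [Nat.cast_sub hvn]; ring
    rwa [h2] at h1
  · refine le_trans (norm_nat_le_one _) (one_le_zpow₀ ?_ ?_)
    · exact_mod_cast hp.out.one_lt.le
    · omega

/-- All coefficients bounded by r. -/
def Bnd (f : MvPowerSeries (Fin 2) ℚ_[p]) (r : ℝ) : Prop :=
  ∀ d, ‖MvPowerSeries.coeff d f‖ ≤ r

lemma Bnd_mul {f g : MvPowerSeries (Fin 2) K} {r t : ℝ} (hr : 0 ≤ r) (ht : 0 ≤ t)
    (hf : Bnd f r) (hg : Bnd g t) : Bnd (f * g) (r * t) := by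
  intro d
  rw [MvPowerSeries.coeff_mul]
  apply IsUltrametricDist.norm_sum_le_of_forall_le_of_nonneg (by positivity)
  rintro ⟨e1, e2⟩ _
  rw [norm_mul]
  exact mul_le_mul (hf e1) (hg e2) (norm_nonneg _) hr

lemma Bnd_one : Bnd (1 : MvPowerSeries (Fin 2) K) 1 := by
  intro d
  rw [MvPowerSeries.coeff_one]
  split_ifs <;> simp

lemma Bnd_pow {f : MvPowerSeries (Fin 2) K} {r : ℝ} (hr : 0 ≤ r) (hf : Bnd f r) (k : ℕ) :
    Bnd (f ^ k) (r ^ k) := by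
  induction k with
  | zero => simpa using Bnd_one
  | succ k ih =>
      rw [pow_succ, pow_succ]
      exact Bnd_mul (by positivity) hr ih hf

lemma Bnd_mono {f : MvPowerSeries (Fin 2) K} {r t : ℝ} (h : r ≤ t) (hf : Bnd f r) : Bnd f t :=
  fun d => (hf d).trans h

lemma Bnd_w : Bnd (X 0 + X 1 : MvPowerSeries (Fin 2) K) 1 := by
  intro d
  rw [map_add, MvPowerSeries.coeff_X, MvPowerSeries.coeff_X]
  have hne : (Finsupp.single (0 : Fin 2) 1 : Fin 2 →₀ ℕ) ≠ Finsupp.single 1 1 := by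
    intro hcon
    have := DFunLike.congr_fun hcon 0
    simp at this
  split_ifs with h1 h2 h2
  · exact absurd (h1 ▸ h2) hne
  all_goals simp

/-- Vanishing lemma: if every monomial of h has y-exponent ≥ q or degree ≥ D,
and g has zero constant term, then coeff of h*g vanishes at d with d 1 < q, deg = D. -/
lemma coeff_mul_vanish {q D : ℕ} {h g : MvPowerSeries (Fin 2) K}
    (hh : ∀ e : Fin 2 →₀ ℕ, MvPowerSeries.coeff e h ≠ 0 → q ≤ e 1 ∨ D ≤ e 0 + e 1)
    (hg : MvPowerSeries.constantCoeff g = 0)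
    (d : Fin 2 →₀ ℕ) (hd1 : d 1 < q) (hdD : d 0 + d 1 = D) :
    MvPowerSeries.coeff d (h * g) = 0 := by
  rw [MvPowerSeries.coeff_mul]
  apply Finset.sum_eq_zero
  rintro ⟨e1, e2⟩ hmem
  replace hmem : e1 + e2 = d := Finset.HasAntidiagonal.mem_antidiagonal.mp hmem
  have h0 : e1 0 + e2 0 = d 0 := by rw [← hmem]; simp
  have h1 : e1 1 + e2 1 = d 1 := by rw [← hmem]; simp
  rcases eq_or_ne (MvPowerSeries.coeff e1 h) 0 with hz | hz
  · simp [hz]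
  rcases hh e1 hz with hq | hD
  · omega
  · have hz2 : e2 0 = 0 ∧ e2 1 = 0 := by omega
    have he2 : e2 = 0 := by
      ext j
      fin_cases j
      · exact hz2.1
      · exact hz2.2
    rw [he2]
    simp only [Finsupp.coe_zero]
    rw [show MvPowerSeries.coeff 0 g = MvPowerSeries.constantCoeff g from rfl, hg, mul_zero]

lemma finsupp_eq_pair_iff (d : Fin 2 →₀ ℕ) (a b : ℕ) :
    d = Finsupp.single (0 : Fin 2) a + Finsupp.single 1 b ↔ d 0 = a ∧ d 1 = b := by
  constructor
  · rintro rfl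
    constructor <;> simp [Finsupp.single_apply]
  · rintro ⟨h0, h1⟩
    ext j
    fin_cases j
    · simpa [Finsupp.single_apply] using h0
    · simpa [Finsupp.single_apply] using h1

lemma natCast_MvPS (n : ℕ) : (n : MvPowerSeries (Fin 2) K) = MvPowerSeries.C (n : K) := by
  rw [map_natCast]

lemma coeff_w_pow (d : Fin 2 →₀ ℕ) (N : ℕ) :
    MvPowerSeries.coeff d ((X 0 + X 1 : MvPowerSeries (Fin 2) K) ^ N) =
      if d 0 + d 1 = N then (N.choose (d 1) : K) else 0 := by
  rw [add_pow, map_sum]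
  have hterm : ∀ k ∈ Finset.range (N + 1),
      MvPowerSeries.coeff d ((X 0 : MvPowerSeries (Fin 2) K) ^ k * X 1 ^ (N - k) * (N.choose k : MvPowerSeries (Fin 2) K)) =
      if d 0 = k ∧ d 1 = N - k then (N.choose k : K) else 0 := by
    intro k _
    rw [natCast_MvPS, MvPowerSeries.coeff_mul_C, X_pow_eq, X_pow_eq, monomial_mul_monomial,
      one_mul, MvPowerSeries.coeff_monomial]
    by_cases hc : d 0 = k ∧ d 1 = N - k
    · rw [if_pos ((finsupp_eq_pair_iff d k (N-k)).mpr hc), if_pos hc, one_mul]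
    · rw [if_neg (fun hh => hc ((finsupp_eq_pair_iff _ _ _).mp hh)), if_neg hc, zero_mul]
  rw [Finset.sum_congr rfl hterm]
  rcases Nat.decEq (d 0 + d 1) N with hN | hN
  · rw [if_neg hN, Finset.sum_eq_zero]
    intro k hk
    rw [if_neg]
    rintro ⟨h0, h1⟩
    rw [Finset.mem_range] at hk
    omega
  · rw [if_pos hN, Finset.sum_eq_single (d 0)]
    · have hnd : N - d 0 = d 1 := by omega
      rw [if_pos ⟨rfl, by omega⟩]
      norm_cast
      rw [← hnd, Nat.choose_symm (by omega : d 0 ≤ N)]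
    · intro k _ hne
      rw [if_neg]; rintro ⟨h0, _⟩; exact hne h0.symm
    · intro hmem
      exact absurd (Finset.mem_range.mpr (by omega)) hmem

lemma key_pow (s : ℕ) (hs : 1 < s) (Fh : MvPowerSeries (Fin 2) K)
    (hB : Bnd Fh 1) (hc : MvPowerSeries.constantCoeff Fh = 0)
    (D : ℕ)
    (IH : ∀ e : Fin 2 →₀ ℕ, e 1 < p ^ (s-1) → e 0 + e 1 < D →
      ‖MvPowerSeries.coeff e (Fh - X 0 - X 1)‖ ≤ (p:ℝ) ^ (-1 : ℤ))
    (i : ℕ) (hi : 1 ≤ i)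
    (d : Fin 2 →₀ ℕ) (hd1 : d 1 < p ^ (s-1)) (hdD : d 0 + d 1 = D) :
    ‖MvPowerSeries.coeff d (Fh ^ (p^(s*i))) -
      MvPowerSeries.coeff d ((X 0 : MvPowerSeries (Fin 2) K) ^ (p^(s*i))) -
      MvPowerSeries.coeff d ((X 1 : MvPowerSeries (Fin 2) K) ^ (p^(s*i)))‖
      ≤ (p:ℝ) ^ (-(i:ℤ) - 1) := by
  have hp1 : (1:ℝ) < p := by exact_mod_cast hp.out.one_lt
  have hp0 : (0:ℝ) < p := by positivity
  set q : ℕ := p ^ (s-1) with hq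
  set N : ℕ := p ^ (s*i) with hN
  have hqN : q < N := by
    rw [hq, hN]
    exact Nat.pow_lt_pow_right hp.out.one_lt (by have := Nat.le_mul_of_pos_right s hi; omega)
  have hN2 : 2 ≤ N := by
    calc 2 ≤ p := hp.out.two_le
    _ = p ^ 1 := (pow_one p).symm
    _ ≤ N := Nat.pow_le_pow_right hp.out.pos (by have := Nat.mul_pos (by omega : 0 < s) hi; omega)
  set w : MvPowerSeries (Fin 2) K := X 0 + X 1 with hw
  set T : MvPowerSeries (Fin 2) K :=
    fun e => if e 1 < q ∧ e 0 + e 1 < D then MvPowerSeries.coeff e (Fh - X 0 - X 1) else 0 with hT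
  have hcoT : ∀ e, MvPowerSeries.coeff e T =
      if e 1 < q ∧ e 0 + e 1 < D then MvPowerSeries.coeff e (Fh - X 0 - X 1) else 0 :=
    fun e => rfl
  have hBT : Bnd T ((p:ℝ) ^ (-1 : ℤ)) := by
    intro e
    rw [hcoT]
    split_ifs with hgood
    · exact IH e hgood.1 hgood.2
    · simp only [norm_zero]
      positivity
  set F' : MvPowerSeries (Fin 2) K := T + w with hF'
  have hconstw : MvPowerSeries.constantCoeff w = 0 := by
    rw [hw, map_add, MvPowerSeries.constantCoeff_X, MvPowerSeries.constantCoeff_X, add_zero]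
  have hconstT : MvPowerSeries.constantCoeff T = 0 := by
    have : MvPowerSeries.constantCoeff T = MvPowerSeries.coeff 0 T := rfl
    rw [this, hcoT]
    split_ifs with hgood
    · rw [map_sub, map_sub]
      have hX0 : MvPowerSeries.coeff 0 (X 0 : MvPowerSeries (Fin 2) K) = 0 := by
        rw [MvPowerSeries.coeff_X, if_neg]
        intro hcon
        have := DFunLike.congr_fun hcon 0
        simp at this
      have hX1 : MvPowerSeries.coeff 0 (X 1 : MvPowerSeries (Fin 2) K) = 0 := by
        rw [MvPowerSeries.coeff_X, if_neg]
        intro hcon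
        have := DFunLike.congr_fun hcon 1
        simp at this
      have hF0 : MvPowerSeries.coeff 0 Fh = 0 := hc
      rw [hF0, hX0, hX1]; ring
    · rfl
  -- Step 1 : coeff d (Fh^N) = coeff d (F'^N)
  have step1 : MvPowerSeries.coeff d (Fh ^ N) = MvPowerSeries.coeff d (F' ^ N) := by
    have hgeom := geom_sum₂_mul Fh F' N
    have hzero : MvPowerSeries.coeff d ((Fh - F') * (∑ j ∈ Finset.range N, Fh ^ j * F' ^ (N - 1 - j))) = 0 := by
      apply coeff_mul_vanish (q := q) (D := D) _ _ d hd1 hdD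
      · intro e hne
        by_contra hcon
        push_neg at hcon
        apply hne
        have hFmF' : Fh - F' = (Fh - X 0 - X 1) - T := by rw [hF', hw]; ring
        rw [hFmF', map_sub, hcoT, if_pos ⟨hcon.1, lt_of_le_of_ne (by omega) (by omega)⟩, sub_self]
      · rw [map_sum]
        apply Finset.sum_eq_zero
        intro j hj
        rw [map_mul, map_pow, map_pow]
        rcases Nat.eq_zero_or_pos j with hj0 | hj0
        · rw [hj0]
          have : MvPowerSeries.constantCoeff F' = 0 := by
            rw [hF', map_add, hconstT, hconstw, add_zero]
          rw [this, zero_pow (by omega : N - 1 - 0 ≠ 0)]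
          ring
        · rw [hc, zero_pow (by omega : j ≠ 0)]
          ring
    have : MvPowerSeries.coeff d (Fh ^ N - F' ^ N) = 0 := by
      rw [← hgeom, mul_comm _ (Fh - F')] at *
      exact hzero
    rw [map_sub] at this
    exact sub_eq_zero.mp this
  rw [step1, hF', add_pow, map_sum]
  have hterm : ∀ k, MvPowerSeries.coeff d (T ^ k * w ^ (N - k) * ((N.choose k : ℕ) : MvPowerSeries (Fin 2) K)) =
      MvPowerSeries.coeff d (T ^ k * w ^ (N - k)) * ((N.choose k : ℕ) : K) := by
    intro k
    rw [natCast_MvPS, MvPowerSeries.coeff_mul_C]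
  rw [Finset.sum_congr rfl (fun k _ => hterm k), Finset.sum_range_succ']
  have hX0cond : (d = Finsupp.single (0:Fin 2) N) ↔ (d 0 = N ∧ d 1 = 0) := by
    rw [← finsupp_eq_pair_iff d N 0, Finsupp.single_zero, add_zero]
  have hX1cond : (d = Finsupp.single (1:Fin 2) N) ↔ (d 0 = 0 ∧ d 1 = N) := by
    rw [← finsupp_eq_pair_iff d 0 N, Finsupp.single_zero, zero_add]
  set A : K := MvPowerSeries.coeff d (w ^ N) -
      MvPowerSeries.coeff d ((X 0 : MvPowerSeries (Fin 2) K) ^ N) -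
      MvPowerSeries.coeff d ((X 1 : MvPowerSeries (Fin 2) K) ^ N) with hA
  set B : K := ∑ k ∈ Finset.range N,
      MvPowerSeries.coeff d (T ^ (k+1) * w ^ (N - (k+1))) * ((N.choose (k+1) : ℕ) : K) with hB
  have hsplit : (∑ k ∈ Finset.range N,
      MvPowerSeries.coeff d (T ^ (k+1) * w ^ (N - (k+1))) * ((N.choose (k+1) : ℕ) : K)) +
      MvPowerSeries.coeff d (T ^ 0 * w ^ (N - 0)) * ((N.choose 0 : ℕ) : K) -
      MvPowerSeries.coeff d ((X 0 : MvPowerSeries (Fin 2) K) ^ N) -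
      MvPowerSeries.coeff d ((X 1 : MvPowerSeries (Fin 2) K) ^ N) = B + A := by
    rw [hA, hB]
    simp only [pow_zero, one_mul, Nat.sub_zero, Nat.choose_zero_right, Nat.cast_one, mul_one]
    ring
  rw [hsplit]
  have hs2 : (2:ℤ) ≤ (s:ℤ) := by exact_mod_cast hs
  have hi1 : (1:ℤ) ≤ (i:ℤ) := by exact_mod_cast hi
  have hsi : (i:ℤ) ≤ (s:ℤ) * (i:ℤ) := by nlinarith
  have hAbound : ‖A‖ ≤ (p:ℝ) ^ (-(i:ℤ) - 1) := by
    rw [hA, coeff_w_pow, MvPowerSeries.coeff_X_pow, MvPowerSeries.coeff_X_pow]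
    by_cases hDN : d 0 + d 1 = N
    · by_cases hd10 : d 1 = 0
      · rw [if_pos hDN, if_pos (hX0cond.mpr ⟨by omega, hd10⟩),
          if_neg (fun hcon => by have := hX1cond.mp hcon; omega), hd10]
        simp only [Nat.choose_zero_right, Nat.cast_one]
        norm_num
        positivity
      · rw [if_pos hDN, if_neg (fun hcon => by have := hX0cond.mp hcon; omega),
          if_neg (fun hcon => by have := hX1cond.mp hcon; omega)]
        rw [sub_zero, sub_zero]
        have hfac : (d 1).factorization p ≤ s - 2 := by
          have := factorization_le_of_lt_pow (p := p) (by omega : 1 ≤ d 1) hd1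
          omega
        have h1 := norm_choose_le (p := p) (n := s*i) (by omega : 1 ≤ d 1) hfac
        refine h1.trans (zpow_le_zpow_right₀ hp1.le ?_)
        have hc2 : ((s - 2 : ℕ) : ℤ) = (s:ℤ) - 2 := by omega
        rw [hc2]
        push_cast
        nlinarith
    · rw [if_neg hDN, if_neg (fun hcon => by have := hX0cond.mp hcon; omega),
        if_neg (fun hcon => by have := hX1cond.mp hcon; omega)]
      simp only [sub_zero, norm_zero]
      positivity
  have hBbound : ‖B‖ ≤ (p:ℝ) ^ (-(i:ℤ) - 1) := by
    rw [hB]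
    apply IsUltrametricDist.norm_sum_le_of_forall_le_of_nonneg (by positivity)
    intro k _
    rw [norm_mul]
    have hTw : ∀ e, ‖MvPowerSeries.coeff e (T ^ (k+1) * w ^ (N - (k+1)))‖ ≤ (p:ℝ) ^ (-((k:ℤ)+1)) := by
      have hb := Bnd_mul (by positivity) (by positivity)
        (Bnd_pow (by positivity) hBT (k+1)) (Bnd_pow zero_le_one Bnd_w (N - (k+1)))
      intro e
      refine (hb e).trans (le_of_eq ?_)
      rw [one_pow, mul_one, ← zpow_natCast ((p:ℝ) ^ (-1:ℤ)), ← zpow_mul]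
      congr 1
      push_cast
      ring
    have hcoeffb := hTw d
    rcases le_or_gt (i:ℤ) (k:ℤ) with hik | hik
    · calc ‖MvPowerSeries.coeff d (T ^ (k+1) * w ^ (N - (k+1)))‖ * ‖((N.choose (k+1) : ℕ) : K)‖
          ≤ (p:ℝ) ^ (-((k:ℤ)+1)) * 1 :=
            mul_le_mul hcoeffb (norm_nat_le_one _) (norm_nonneg _) (by positivity)
        _ = (p:ℝ) ^ (-((k:ℤ)+1)) := mul_one _
        _ ≤ (p:ℝ) ^ (-(i:ℤ) - 1) := zpow_le_zpow_right₀ hp1.le (by omega)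
    · have hk1 : 1 ≤ k + 1 := by omega
      have hfac : (k+1).factorization p ≤ k := by
        have := factorization_le_of_lt_pow (p := p) hk1 (Nat.lt_pow_self (n := k+1) hp.out.one_lt)
        omega
      have hCb := norm_choose_le (p := p) (n := s*i) hk1 hfac
      calc ‖MvPowerSeries.coeff d (T ^ (k+1) * w ^ (N - (k+1)))‖ * ‖((N.choose (k+1) : ℕ) : K)‖
          ≤ (p:ℝ) ^ (-((k:ℤ)+1)) * (p:ℝ) ^ (-((s*i : ℕ):ℤ) + (k:ℕ)) :=
            mul_le_mul hcoeffb hCb (norm_nonneg _) (by positivity)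
        _ = (p:ℝ) ^ ((-((k:ℤ)+1)) + (-((s*i : ℕ):ℤ) + (k:ℕ))) := (zpow_add₀ (ne_of_gt hp0) _ _).symm
        _ ≤ (p:ℝ) ^ (-(i:ℤ) - 1) := by
            apply zpow_le_zpow_right₀ hp1.le
            push_cast
            nlinarith
  calc ‖B + A‖ ≤ max ‖B‖ ‖A‖ := Padic.nonarchimedean B A
    _ ≤ (p:ℝ) ^ (-(i:ℤ) - 1) := max_le hBbound hAbound

lemma deg_eq (d : Fin 2 →₀ ℕ) : (d.sum fun _ k => k) = d 0 + d 1 := by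
  rw [Finsupp.sum_fintype]
  · exact Fin.sum_univ_two _
  · intro i; rfl

lemma coeff_X0_zero : MvPowerSeries.coeff 0 (X 0 : MvPowerSeries (Fin 2) K) = 0 := by
  rw [MvPowerSeries.coeff_X, if_neg]
  intro hcon
  have := DFunLike.congr_fun hcon 0
  simp at this

lemma coeff_X1_zero : MvPowerSeries.coeff 0 (X 1 : MvPowerSeries (Fin 2) K) = 0 := by
  rw [MvPowerSeries.coeff_X, if_neg]
  intro hcon
  have := DFunLike.congr_fun hcon 1
  simp at this

lemma main_induction (s : ℕ) (hs : 1 < s) (F₀ : MvPowerSeries (Fin 2) ℤ_[p])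
    (hc0 : MvPowerSeries.constantCoeff F₀ = 0)
    (heq : substPS (MvPowerSeries.map (PadicInt.Coe.ringHom (p := p)) F₀) (hondaLog p s) =
      substPS (MvPowerSeries.X 0) (hondaLog p s) + substPS (MvPowerSeries.X 1) (hondaLog p s)) :
    ∀ D : ℕ, ∀ d : Fin 2 →₀ ℕ, d 1 < p ^ (s-1) → d 0 + d 1 < D →
      ‖MvPowerSeries.coeff d
        (MvPowerSeries.map (PadicInt.Coe.ringHom (p := p)) F₀ - X 0 - X 1)‖
        ≤ (p:ℝ) ^ (-1 : ℤ) := by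
  have hp1 : (1:ℝ) < p := by exact_mod_cast hp.out.one_lt
  have hp0 : (0:ℝ) < p := by positivity
  set Fh : MvPowerSeries (Fin 2) K :=
    MvPowerSeries.map (PadicInt.Coe.ringHom (p := p)) F₀ with hFh
  have hB : Bnd Fh 1 := by
    intro e
    rw [hFh, MvPowerSeries.coeff_map]
    exact PadicInt.norm_le_one _
  have hc : MvPowerSeries.constantCoeff Fh = 0 := by
    have : MvPowerSeries.constantCoeff Fh = MvPowerSeries.coeff 0 Fh := rfl
    rw [this, hFh, MvPowerSeries.coeff_map]
    have : MvPowerSeries.coeff 0 F₀ = 0 := hc0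
    rw [this, map_zero]
  -- pointwise form of the functional equation
  have heqd : ∀ d : Fin 2 →₀ ℕ,
      (∑ m ∈ Finset.range (d 0 + d 1 + 1), PowerSeries.coeff m (hondaLog p s) *
        MvPowerSeries.coeff d (Fh ^ m)) =
      (∑ m ∈ Finset.range (d 0 + d 1 + 1), PowerSeries.coeff m (hondaLog p s) *
        MvPowerSeries.coeff d ((X 0 : MvPowerSeries (Fin 2) K) ^ m)) +
      (∑ m ∈ Finset.range (d 0 + d 1 + 1), PowerSeries.coeff m (hondaLog p s) *
        MvPowerSeries.coeff d ((X 1 : MvPowerSeries (Fin 2) K) ^ m)) := by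
    intro d
    have h1 := congrArg (MvPowerSeries.coeff d) heq
    rw [map_add, MvPowerSeries.coeff_apply, MvPowerSeries.coeff_apply,
      MvPowerSeries.coeff_apply] at h1
    simpa only [substPS, deg_eq] using h1
  intro D
  induction D with
  | zero => intro d _ h; omega
  | succ D IHD =>
    intro d hd1 hdlt
    by_cases hlt : d 0 + d 1 < D
    · exact IHD d hd1 hlt
    have hdD : d 0 + d 1 = D := by omega
    rcases Nat.lt_or_ge D 2 with hD2 | hD2
    · -- D = 0 or D = 1 : exact computation
      rcases Nat.lt_or_ge D 1 with hD1 | hD1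
      · -- D = 0, d = 0
        have hd0 : d = 0 := by
          ext j
          fin_cases j
          · simpa using (by omega : d 0 = 0)
          · simpa using (by omega : d 1 = 0)
        rw [hd0, map_sub, map_sub, coeff_X0_zero, coeff_X1_zero]
        have : MvPowerSeries.coeff 0 Fh = 0 := hc
        rw [this]
        simp only [sub_zero, sub_self, norm_zero]
        positivity
      · -- D = 1
        have hD : D = 1 := by omega
        have h1 := heqd d
        rw [hdD, hD] at h1
        simp only [Finset.sum_range_succ, Finset.sum_range_zero, hl_coeff_zero,
          hl_coeff_one, zero_mul, one_mul, zero_add, pow_one] at h1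
        rw [map_sub, map_sub, sub_sub, ← h1]
        simp only [sub_self, norm_zero]
        positivity
    · -- main case D ≥ 2
      obtain ⟨D', rfl⟩ : ∃ D', D = D' + 2 := ⟨D - 2, by omega⟩
      set f : ℕ → K := fun m => PowerSeries.coeff m (hondaLog p s) *
        (MvPowerSeries.coeff d (Fh ^ m) -
         MvPowerSeries.coeff d ((X 0 : MvPowerSeries (Fin 2) K) ^ m) -
         MvPowerSeries.coeff d ((X 1 : MvPowerSeries (Fin 2) K) ^ m)) with hf
      have hsum : ∑ m ∈ Finset.range (D' + 2 + 1), f m = 0 := by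
        have h1 := heqd d
        rw [hdD] at h1
        simp only [hf, mul_sub]
        rw [Finset.sum_sub_distrib, Finset.sum_sub_distrib, h1]
        ring
      rw [Finset.sum_range_succ', Finset.sum_range_succ'] at hsum
      -- hsum : (∑ j ∈ range (D'+1), f (j+1+1) + f (0+1)) + f 0 = 0
      have hf0 : f 0 = 0 := by simp only [hf, hl_coeff_zero, zero_mul]
      have hf1 : f 1 = MvPowerSeries.coeff d (Fh - X 0 - X 1) := by
        simp only [hf, hl_coeff_one, one_mul, pow_one, map_sub]
      have hkey : MvPowerSeries.coeff d (Fh - X 0 - X 1) =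
          -(∑ j ∈ Finset.range (D' + 1), f (j + 1 + 1)) := by
        rw [← hf1]
        rw [hf0, add_zero] at hsum
        exact eq_neg_of_add_eq_zero_right hsum
      rw [hkey, norm_neg]
      apply IsUltrametricDist.norm_sum_le_of_forall_le_of_nonneg (by positivity)
      intro j _
      simp only [hf]
      by_cases hex : ∃ ii, j + 1 + 1 = p ^ (s * ii)
      · obtain ⟨ii, hii⟩ := hex
        have hii1 : 1 ≤ ii := by
          rcases Nat.eq_zero_or_pos ii with h0 | h1
          · rw [h0, mul_zero, pow_zero] at hii; omega
          · exact h1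
        rw [hii, hl_coeff_pow s (by omega) ii, norm_mul]
        have hkp := key_pow s hs Fh hB hc (D' + 2) (fun e he1 he2 => IHD e he1 he2) ii hii1 d hd1 hdD
        have hnorm_cm : ‖(p : K) ^ (-(ii:ℤ))‖ = (p:ℝ) ^ (ii:ℤ) := by
          rw [Padic.norm_p_zpow]
          ring_nf
        rw [hnorm_cm]
        refine le_trans (mul_le_mul_of_nonneg_left hkp (by positivity)) (le_of_eq ?_)
        rw [← zpow_add₀ (ne_of_gt hp0), show (ii:ℤ) + (-(ii:ℤ) - 1) = -1 by ring]
      · push_neg at hex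
        rw [hl_coeff_of_ne s (j+1+1) hex, zero_mul, norm_zero]
        positivity

end HondaAux

/-- For `s > 1` and `q = p^(s-1)`, `F(x,y) ≡ x + y mod (y^q)`:
every coefficient of `xⁱ yʲ` in `F` with `j < q` agrees with the corresponding
coefficient of the polynomial `x + y`. -/
theorem honda_congr_add_mod_y_q (p : ℕ) [Fact p.Prime] (s : ℕ) (hs : 1 < s)
    (F : MvPowerSeries (Fin 2) (ZMod p)) (hF : IsHondaFGL p s F) :
    ∀ i j : ℕ, j < p ^ (s - 1) →
      MvPowerSeries.coeff (Finsupp.single (0 : Fin 2) i + Finsupp.single 1 j) F =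
        MvPolynomial.coeff (Finsupp.single (0 : Fin 2) i + Finsupp.single 1 j)
          (MvPolynomial.X 0 + MvPolynomial.X 1 : MvPolynomial (Fin 2) (ZMod p)) := by
  intro i j hj
  obtain ⟨F₀, hc0, heq, rfl⟩ := hF
  have hp1 : (1:ℝ) < p := by exact_mod_cast ‹Fact p.Prime›.out.one_lt
  set d : Fin 2 →₀ ℕ := Finsupp.single (0 : Fin 2) i + Finsupp.single 1 j with hd
  have hd0 : d 0 = i := by
    rw [hd, Finsupp.add_apply, Finsupp.single_eq_same, Finsupp.single_eq_of_ne (by decide), add_zero]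
  have hd1 : d 1 = j := by
    rw [hd, Finsupp.add_apply, Finsupp.single_eq_same, Finsupp.single_eq_of_ne (by decide), zero_add]
  -- the ℤ_[p] "x+y" coefficient
  have hw : ∃ w : ℤ_[p], w = (if d = Finsupp.single (0:Fin 2) 1 then 1 else 0) +
    (if d = Finsupp.single (1:Fin 2) 1 then 1 else 0) := ⟨_, rfl⟩
  obtain ⟨w, hw⟩ := hw
  -- norm bound
  have hmain := main_induction s hs F₀ hc0 heq (d 0 + d 1 + 1) d (by omega) (by omega)
  have hcoe : MvPowerSeries.coeff d
      (MvPowerSeries.map (PadicInt.Coe.ringHom (p := p)) F₀ - X 0 - X 1) =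
      ((MvPowerSeries.coeff d F₀ - w : ℤ_[p]) : ℚ_[p]) := by
    rw [map_sub, map_sub, MvPowerSeries.coeff_map, MvPowerSeries.coeff_X, MvPowerSeries.coeff_X,
      hw]
    have hrh : ∀ z : ℤ_[p], PadicInt.Coe.ringHom (p:=p) z = (z : ℚ_[p]) := fun z => rfl
    rw [hrh]
    split_ifs <;> push_cast <;> ring
  rw [hcoe] at hmain
  have hlt : ‖MvPowerSeries.coeff d F₀ - w‖ < 1 := by
    rw [PadicInt.norm_def]
    refine lt_of_le_of_lt hmain ?_
    rw [zpow_neg_one]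
    exact inv_lt_one_of_one_lt₀ hp1
  have hker : PadicInt.toZMod (MvPowerSeries.coeff d F₀ - w) = 0 := by
    rw [← RingHom.mem_ker, PadicInt.ker_toZMod]
    exact PadicInt.mem_nonunits.mpr hlt
  rw [map_sub, sub_eq_zero] at hker
  rw [MvPowerSeries.coeff_map, hker]
  -- now compute both sides explicitly
  rw [hw]
  rw [MvPolynomial.coeff_add, MvPolynomial.coeff_X', MvPolynomial.coeff_X']
  rw [map_add, apply_ite PadicInt.toZMod, apply_ite PadicInt.toZMod, map_one, map_zero]
  congr 1
  · by_cases h : d = Finsupp.single (0:Fin 2) 1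
    · rw [if_pos h, if_pos h.symm]
    · rw [if_neg h, if_neg (fun hcon => h hcon.symm)]
  · by_cases h : d = Finsupp.single (1:Fin 2) 1
    · rw [if_pos h, if_pos h.symm]
    · rw [if_neg h, if_neg (fun hcon => h hcon.symm)]
end
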